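/- arXiv:1103.2955 — 3 statements merged into one kernel-verified Lean document; each statement's English description precedes it below -/
import Mathlib

section
/- Let (I, ≤) be a directed poset and let G = lim G_i be the inverse limit of an inverse system {G_i, φ_ij, I} of pro-p groups. Suppose there is a constant d such that d(G_i) = d for all i ∈ I. If d(G) = d, then there exists j ∈ I such that the projection φ_j : G → G_j is surjective. -/
/-!
Basic notions for pro-`p` groups.  Throughout, a pro-`p` group is a compact,
Hausdorff, totally disconnected topological group (these assumptions are carried
as typeclass hypotheses) satisfying the predicate `IsProP`: every open normal
subgroup has index a power of `p`.
-/

universe u v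

/-- Every open normal subgroup has index a power of `p`. -/
def IsProP (p : ℕ) (G : Type u) [Group G] [TopologicalSpace G] : Prop :=
  ∀ N : Subgroup G, N.Normal → IsOpen (N : Set G) → ∃ n : ℕ, N.index = p ^ n

/-- The set `X` topologically generates `G`. -/
def TopGenerates (G : Type u) [Group G] [TopologicalSpace G] (X : Set G) : Prop :=
  closure ((Subgroup.closure X : Subgroup G) : Set G) = Set.univ

/-- `d(G)`: the minimal cardinality of a topological generating set of `G`, in `ℕ∞`. -/
noncomputable def dRank (G : Type u) [Group G] [TopologicalSpace G] : ℕ∞ :=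
  ⨅ X : {X : Set G // TopGenerates G X}, (X.1).encard

/-- A subgroup is procyclic if it is topologically generated by one of its elements. -/
def Subgroup.IsProcyclic {G : Type u} [Group G] [TopologicalSpace G] (C : Subgroup G) : Prop :=
  ∃ c ∈ C, (C : Set G) ⊆ closure ((Subgroup.closure {c} : Subgroup G) : Set G)

/-- The smallest closed normal subgroup containing a subset `S`. -/
def closedNormalClosure {G : Type u} [Group G] [TopologicalSpace G] (S : Set G) : Subgroup G :=
  sInf {N : Subgroup G | S ⊆ ↑N ∧ N.Normal ∧ IsClosed (N : Set G)}

/-- The Frattini subgroup of a topological group: the intersection of all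
maximal open (proper) subgroups. -/
def proPFrattini (G : Type u) [Group G] [TopologicalSpace G] : Subgroup G :=
  sInf {M : Subgroup G | IsOpen (M : Set G) ∧ IsCoatom M}

/-- A closed subgroup is (topologically) finitely generated. -/
def Subgroup.TopFG {G : Type u} [Group G] [TopologicalSpace G] (H : Subgroup G) : Prop :=
  ∃ S : Set G, S.Finite ∧ S ⊆ ↑H ∧
    (H : Set G) ⊆ closure ((Subgroup.closure S : Subgroup G) : Set G)

/-!  Inverse systems of (pro-`p`) groups over a directed poset and their inverse limits. -/

/-- The inverse limit of an inverse system of groups, as a subgroup of the product. -/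
def invLim {I : Type u} [Preorder I] (G : I → Type v) [∀ i, Group (G i)]
    (φ : ∀ i j : I, j ≤ i → (G i →* G j)) : Subgroup (∀ i, G i) where
  carrier := {x | ∀ (i j : I) (h : j ≤ i), φ i j h (x i) = x j}
  one_mem' := by intro i j h; simp
  mul_mem' := by intro a b ha hb i j h; simp [ha i j h, hb i j h]
  inv_mem' := by intro a ha i j h; simp [ha i j h]

/-- The projection from the inverse limit to the `i`-th group of the system. -/
def invLimProj {I : Type u} [Preorder I] (G : I → Type v) [∀ i, Group (G i)]
    (φ : ∀ i j : I, j ≤ i → (G i →* G j)) (i : I) : ↥(invLim G φ) →* G i :=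
  (Pi.evalMonoidHom G i).comp (invLim G φ).subtype


universe w

section FiniteP
open Pointwise

variable {p : ℕ} [Fact p.Prime]

private lemma zmem_of_zpow_mem {Q : Type w} [Group Q] {M : Subgroup Q} {z : Q}
    (hzp : orderOf z = p) {a : ℤ} (ha : z ^ a ∈ M) (hnd : ¬ ((p : ℤ) ∣ a)) : z ∈ M := by
  have hu : (a : ZMod p) ≠ 0 := by
    rwa [Ne, ZMod.intCast_zmod_eq_zero_iff_dvd]
  obtain ⟨w, hw⟩ := ZMod.intCast_surjective ((a : ZMod p)⁻¹)
  have hcast : ((a * w - 1 : ℤ) : ZMod p) = 0 := by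
    push_cast
    rw [hw, mul_inv_cancel₀ hu, sub_self]
  have hdvd : (p : ℤ) ∣ a * w - 1 := (ZMod.intCast_zmod_eq_zero_iff_dvd _ p).mp hcast
  have h1 : z ^ (1 - a * w) = 1 := by
    rw [← orderOf_dvd_iff_zpow_eq_one, hzp]
    exact (dvd_sub_comm).mp hdvd
  have : z = z ^ (a * w) * z ^ (1 - a * w) := by
    rw [← zpow_add]
    norm_num
  rw [this, h1, mul_one, zpow_mul]
  exact Subgroup.zpow_mem M ha w

private theorem finL (n : ℕ) : ∀ {Q : Type w} [Group Q] [Finite Q], Nat.card Q = n →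
    IsPGroup p Q → ∀ {D : Subgroup Q}, D ≠ ⊤ →
    ∃ g : Q → ZMod p, (∀ a b, g (a * b) = g a + g b) ∧ (∀ x ∈ D, g x = 0) ∧ g ≠ 0 := by
  induction n using Nat.strong_induction_on with
  | _ n IH =>
  intro Q _ _ hcard hQ D hD
  -- a coatom above D
  obtain hDtop | ⟨M, hM, hDM⟩ := eq_top_or_exists_le_coatom D
  · exact absurd hDtop hD
  -- Q is nontrivial
  obtain ⟨x, -, hxM⟩ := SetLike.exists_of_lt hM.1.lt_top
  have : Nontrivial Q := ⟨⟨x, 1, fun h => hxM (h ▸ M.one_mem)⟩⟩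
  -- a central element of order p
  have hcenter : Nontrivial (Subgroup.center Q) := hQ.center_nontrivial
  have hdvd : p ∣ Nat.card (Subgroup.center Q) := by
    rcases (hQ.to_subgroup (Subgroup.center Q)).card_eq_or_dvd with h | h
    · rw [Nat.card_eq_one_iff_unique] at h
      exact absurd h.1 (not_subsingleton _)
    · exact h
  have : Fintype (Subgroup.center Q) := Fintype.ofFinite _
  obtain ⟨z₀, hz₀⟩ := exists_prime_orderOf_dvd_card (G := Subgroup.center Q) p
    (by rwa [← Nat.card_eq_fintype_card])
  set z : Q := (z₀ : Q) with hzdef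
  have hzc : z ∈ Subgroup.center Q := z₀.2
  have hzp : orderOf z = p := by rw [hzdef, Subgroup.orderOf_coe, hz₀]
  have hcomm : ∀ (g : Q) (k : ℤ), g * z ^ k = z ^ k * g := fun g k =>
    (Subgroup.mem_center_iff.mp (Subgroup.zpow_mem _ hzc k) g)
  have Znormal : (Subgroup.zpowers z).Normal := by
    constructor
    intro x hx g
    obtain ⟨k, rfl⟩ := Subgroup.mem_zpowers_iff.mp hx
    have : g * z ^ k * g⁻¹ = z ^ k := by
      rw [hcomm g k, mul_assoc, mul_inv_cancel, mul_one]
    rw [this]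
    exact Subgroup.zpow_mem _ (Subgroup.mem_zpowers z) k
  by_cases hzM : z ∈ M
  · -- quotient by the central subgroup Z
    set Z := Subgroup.zpowers z
    have hZle : Z ≤ M := Subgroup.zpowers_le.mpr hzM
    have hcardZ : Nat.card Z = p := by rw [Nat.card_zpowers, hzp]
    have hcardQ : Nat.card Q = Nat.card (Q ⧸ Z) * Nat.card Z :=
      Subgroup.card_eq_card_quotient_mul_card_subgroup Z
    have hlt : Nat.card (Q ⧸ Z) < n := by
      have hp1 : 1 < p := (Fact.out : p.Prime).one_lt
      have hpos : 0 < Nat.card (Q ⧸ Z) := Nat.card_pos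
      rw [← hcard, hcardQ, hcardZ]
      exact lt_mul_iff_one_lt_right hpos |>.mpr hp1
    have hQ' : IsPGroup p (Q ⧸ Z) := hQ.to_quotient Z
    have hD' : M.map (QuotientGroup.mk' Z) ≠ ⊤ := by
      intro h
      have h2 := congrArg (Subgroup.comap (QuotientGroup.mk' Z)) h
      rw [Subgroup.comap_map_eq, QuotientGroup.ker_mk', sup_of_le_left hZle,
        Subgroup.comap_top] at h2
      exact hM.1 h2
    obtain ⟨g', hg'hom, hg'van, hg'ne⟩ := IH _ hlt rfl hQ' hD'
    refine ⟨g' ∘ QuotientGroup.mk' Z, fun a b => by simp [hg'hom], fun x hx => ?_, ?_⟩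
    · exact hg'van _ (Subgroup.mem_map_of_mem _ (hDM hx))
    · intro h
      apply hg'ne
      funext q
      obtain ⟨x, rfl⟩ := QuotientGroup.mk'_surjective Z q
      exact congrFun h x
  · -- M ⊔ ⟨z⟩ = ⊤ ; build the map by hand
    have hlt2 : M < M ⊔ Subgroup.zpowers z :=
      SetLike.lt_iff_le_and_exists.mpr
        ⟨le_sup_left, z, Subgroup.mem_sup_right (Subgroup.mem_zpowers z), hzM⟩
    have htop : M ⊔ Subgroup.zpowers z = ⊤ := hM.2 _ hlt2
    have P : ∀ q : Q, ∃ m, m ∈ M ∧ ∃ k : ℤ, q = m * z ^ k := by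
      intro q
      have hq : q ∈ (M : Set Q) * (Subgroup.zpowers z : Set Q) := by
        rw [← Subgroup.mul_normal M (Subgroup.zpowers z), htop]
        trivial
      obtain ⟨m, hm, c, hc, rfl⟩ := hq
      obtain ⟨k, rfl⟩ := Subgroup.mem_zpowers_iff.mp hc
      exact ⟨m, hm, k, rfl⟩
    choose m hm k hk using P
    have udvd : ∀ {a : ℤ}, z ^ a ∈ M → (p : ℤ) ∣ a := by
      intro a ha
      by_contra h
      exact hzM (zmem_of_zpow_mem hzp ha h)
    have key : ∀ (q m' : Q) (k' : ℤ), m' ∈ M → q = m' * z ^ k' →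
        ((k q : ℤ) : ZMod p) = ((k' : ℤ) : ZMod p) := by
      intro q m' k' hm' hq'
      have heq : m q * z ^ k q = m' * z ^ k' := (hk q).symm.trans hq'
      have h3 : m q = m' * z ^ k' * (z ^ k q)⁻¹ := eq_mul_inv_iff_mul_eq.mpr heq
      have h2 : m'⁻¹ * m q = z ^ (k' - k q) := by
        rw [h3, zpow_sub]
        group
      have hmem : z ^ (k' - k q) ∈ M := h2 ▸ M.mul_mem (M.inv_mem hm') (hm q)
      have hdd := udvd hmem
      rw [ZMod.intCast_eq_intCast_iff]
      exact Int.modEq_iff_dvd.mpr hdd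
    refine ⟨fun q => ((k q : ℤ) : ZMod p), fun a b => ?_, fun x hx => ?_, ?_⟩
    · have habk : a * b = (m a * m b) * z ^ (k a + k b) := by
        conv_lhs => rw [hk a, hk b]
        rw [zpow_add]
        simp only [mul_assoc]
        rw [← mul_assoc (z ^ k a), ← hcomm (m b) (k a), mul_assoc]
      show ((k (a * b) : ℤ) : ZMod p) = ((k a : ℤ) : ZMod p) + ((k b : ℤ) : ZMod p)
      rw [key (a * b) _ _ (M.mul_mem (hm a) (hm b)) habk]
      push_cast
      ring
    · show ((k x : ℤ) : ZMod p) = 0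
      rw [key x x 0 (hDM hx) (by simp)]
      simp
    · intro h
      have h1 : ((k z : ℤ) : ZMod p) = 0 := congrFun h z
      rw [key z 1 1 M.one_mem (by simp)] at h1
      norm_num at h1

end FiniteP

section PDual

open Pointwise

variable {p : ℕ} [Fact p.Prime]

private lemma phom_one {K : Type w} [Group K] {f : K → ZMod p}
    (hf : ∀ x y, f (x * y) = f x + f y) : f 1 = 0 := by
  have := hf 1 1
  rw [mul_one] at this
  exact left_eq_add.mp this

private lemma phom_inv {K : Type w} [Group K] {f : K → ZMod p}
    (hf : ∀ x y, f (x * y) = f x + f y) (x : K) : f x⁻¹ = - f x := by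
  have := hf x⁻¹ x
  rw [inv_mul_cancel, phom_one hf] at this
  exact eq_neg_of_add_eq_zero_left this.symm

/-- The subgroup on which an additive-valued homomorphism vanishes. -/
private def zeroSub {K : Type w} [Group K] (f : K → ZMod p)
    (hf : ∀ x y, f (x * y) = f x + f y) : Subgroup K where
  carrier := {x | f x = 0}
  one_mem' := phom_one hf
  mul_mem' := by
    intro a b ha hb
    simp only [Set.mem_setOf_eq] at *
    rw [hf, ha, hb, add_zero]
  inv_mem' := by
    intro a ha
    simp only [Set.mem_setOf_eq] at *
    rw [phom_inv hf, ha, neg_zero]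

private lemma phom_fiber_open {K : Type w} [Group K] [TopologicalSpace K] [IsTopologicalGroup K]
    {f : K → ZMod p} (hf : ∀ x y, f (x * y) = f x + f y)
    (hopen : IsOpen {x : K | f x = 0}) (c : ZMod p) : IsOpen {x : K | f x = c} := by
  rcases Set.eq_empty_or_nonempty {x : K | f x = c} with h | ⟨x₀, hx₀⟩
  · rw [h]; exact isOpen_empty
  · have : {x : K | f x = c} = (fun y => x₀ * y) '' {x : K | f x = 0} := by
      ext y
      constructor
      · intro hy
        refine ⟨x₀⁻¹ * y, ?_, by group⟩
        simp only [Set.mem_setOf_eq] at *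
        rw [hf, phom_inv hf, hx₀, hy]
        ring
      · rintro ⟨u, hu, rfl⟩
        simp only [Set.mem_setOf_eq] at *
        rw [hf, hx₀, hu, add_zero]
    rw [this]
    exact isOpenMap_mul_left x₀ _ hopen

variable (p) in
/-- The space of continuous homomorphisms into `ZMod p`, as a `ZMod p`-vector space. -/
private def pdual (K : Type w) [Group K] [TopologicalSpace K] [IsTopologicalGroup K] :
    Submodule (ZMod p) (K → ZMod p) where
  carrier := {f | (∀ x y, f (x * y) = f x + f y) ∧ IsOpen {x : K | f x = 0}}
  zero_mem' := by
    refine ⟨fun x y => by simp, ?_⟩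
    have : {x : K | (0 : K → ZMod p) x = 0} = Set.univ := by ext; simp
    rw [this]; exact isOpen_univ
  add_mem' := by
    rintro f g ⟨hf, hfo⟩ ⟨hg, hgo⟩
    refine ⟨fun x y => by simp only [Pi.add_apply, hf, hg]; ring, ?_⟩
    have : {x : K | (f + g) x = 0} = ⋃ c : ZMod p, ({x | f x = c} ∩ {x | g x = -c}) := by
      ext x
      simp only [Set.mem_iUnion, Set.mem_inter_iff, Set.mem_setOf_eq, Pi.add_apply]
      constructor
      · intro h; exact ⟨f x, rfl, eq_neg_of_add_eq_zero_right h⟩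
      · rintro ⟨c, h1, h2⟩; rw [h1, h2]; ring
    rw [this]
    exact isOpen_iUnion fun c =>
      (phom_fiber_open hf hfo c).inter (phom_fiber_open hg hgo (-c))
  smul_mem' := by
    rintro c f ⟨hf, hfo⟩
    refine ⟨fun x y => by simp only [Pi.smul_apply, hf, smul_eq_mul]; ring, ?_⟩
    by_cases hc : c = 0
    · have : {x : K | (c • f) x = 0} = Set.univ := by ext x; simp [hc]
      rw [this]; exact isOpen_univ
    · have : {x : K | (c • f) x = 0} = {x : K | f x = 0} := by
        ext x
        simp only [Set.mem_setOf_eq, Pi.smul_apply, smul_eq_mul, mul_eq_zero]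
        tauto
      rw [this]; exact hfo

private lemma pdual_zero_isClosed {K : Type w} [Group K] [TopologicalSpace K]
    [IsTopologicalGroup K] {f : K → ZMod p} (hf : f ∈ pdual p K) :
    IsClosed {x : K | f x = 0} := by
  rw [← isOpen_compl_iff]
  have : {x : K | f x = 0}ᶜ = ⋃ (c : ZMod p) (_ : c ≠ 0), {x : K | f x = c} := by
    ext x
    simp only [Set.mem_compl_iff, Set.mem_setOf_eq, Set.mem_iUnion]
    constructor
    · intro h; exact ⟨f x, h, rfl⟩
    · rintro ⟨c, hc, h⟩; rw [h]; exact hc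
  rw [this]
  exact isOpen_iUnion fun c => isOpen_iUnion fun hc => phom_fiber_open hf.1 hf.2 c

private lemma pdual_eq_zero_of_gen {K : Type w} [Group K] [TopologicalSpace K]
    [IsTopologicalGroup K] {f : K → ZMod p} (hf : f ∈ pdual p K) {X : Set K}
    (hX : TopGenerates K X) (h0 : ∀ x ∈ X, f x = 0) : f = 0 := by
  have h1 : Subgroup.closure X ≤ zeroSub f hf.1 := (Subgroup.closure_le _).mpr h0
  have h2 : closure ((Subgroup.closure X : Subgroup K) : Set K) ⊆ {x : K | f x = 0} :=
    closure_minimal h1 (pdual_zero_isClosed hf)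
  rw [hX] at h2
  funext x
  exact h2 (Set.mem_univ x)

end PDual

section PDual2

open Pointwise

variable {p : ℕ} [Fact p.Prime]

private lemma dRank_le_encard {K : Type w} [Group K] [TopologicalSpace K] {X : Set K}
    (hX : TopGenerates K X) : dRank K ≤ X.encard :=
  iInf_le (fun Y : {X : Set K // TopGenerates K X} => (Y.1).encard) ⟨X, hX⟩

private lemma exists_gen_of_dRank_le {K : Type w} [Group K] [TopologicalSpace K] {d : ℕ}
    (h : dRank K ≤ (d : ℕ∞)) : ∃ X : Set K, TopGenerates K X ∧ X.Finite ∧ X.ncard ≤ d := by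
  have hlt : dRank K < ((d + 1 : ℕ) : ℕ∞) :=
    lt_of_le_of_lt h (by exact_mod_cast Nat.lt_succ_self d)
  rw [dRank, iInf_lt_iff] at hlt
  obtain ⟨⟨X, hX⟩, hlt⟩ := hlt
  have hfin : X.Finite := by
    rw [← Set.encard_lt_top_iff]
    exact hlt.trans_le le_top
  refine ⟨X, hX, hfin, ?_⟩
  rw [hfin.encard_eq_coe_toFinset_card] at hlt
  rw [Set.ncard_eq_toFinset_card X hfin]
  exact Nat.lt_succ_iff.mp (Nat.cast_lt.mp hlt)

private lemma pdual_finite {K : Type w} [Group K] [TopologicalSpace K] [IsTopologicalGroup K]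
    {X : Set K} (hgen : TopGenerates K X) (hfin : X.Finite) :
    Module.Finite (ZMod p) (pdual p K) ∧
      Module.finrank (ZMod p) (pdual p K) ≤ X.ncard := by
  haveI := hfin.to_subtype
  haveI := Fintype.ofFinite ↥X
  let Res : pdual p K →ₗ[ZMod p] (↥X → ZMod p) :=
    { toFun := fun f => fun x => f.1 x.1
      map_add' := fun f g => rfl
      map_smul' := fun c f => rfl }
  have hinj : Function.Injective Res := by
    intro f g h
    apply Subtype.ext
    have hmem := sub_mem f.2 g.2
    have hz : f.1 - g.1 = 0 := by
      refine pdual_eq_zero_of_gen hmem hgen fun x hx => ?_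
      have := congrFun h ⟨x, hx⟩
      simpa [Res, sub_eq_zero] using this
    have := sub_eq_zero.mp hz
    exact this
  haveI hMF : Module.Finite (ZMod p) (pdual p K) := Module.Finite.of_injective Res hinj
  refine ⟨hMF, ?_⟩
  have h1 := LinearMap.finrank_le_finrank_of_injective hinj
  rw [Module.finrank_pi (ZMod p)] at h1
  rwa [Set.ncard_eq_toFinset_card', Set.toFinset_card]

private lemma exists_openNormal {K : Type w} [Group K] [TopologicalSpace K] [IsTopologicalGroup K]
    [CompactSpace K] [T2Space K] [TotallyDisconnectedSpace K] {U : Set K} (hU : U ∈ nhds 1) :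
    ∃ N : OpenNormalSubgroup K, (N : Set K) ⊆ U := by
  obtain ⟨V, ⟨h1V, hVclopen⟩, hVU⟩ := (nhds_basis_clopen (1 : K)).mem_iff.mp hU
  obtain ⟨N, hN⟩ :=
    IsTopologicalGroup.exist_openNormalSubgroup_sub_clopen_nhds_of_one hVclopen h1V
  exact ⟨N, hN.trans hVU⟩

/-- P1: a proper closed subgroup of a pro-`p` group is killed by a nonzero element
of the dual. -/
private lemma exists_pdual_of_ne_top {K : Type w} [Group K] [TopologicalSpace K]
    [IsTopologicalGroup K] [CompactSpace K] [T2Space K] [TotallyDisconnectedSpace K]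
    (hpro : IsProP p K) {C : Subgroup K} (hCc : IsClosed (C : Set K)) (hC : C ≠ ⊤) :
    ∃ f : K → ZMod p, f ∈ pdual p K ∧ (∀ c ∈ C, f c = 0) ∧ f ≠ 0 := by
  obtain ⟨x, -, hxC⟩ := SetLike.exists_of_lt hC.lt_top
  have hU : (fun y => x * y) ⁻¹' ((C : Set K)ᶜ) ∈ nhds (1 : K) := by
    refine IsOpen.mem_nhds (hCc.isOpen_compl.preimage (continuous_mul_left x)) ?_
    simpa using hxC
  obtain ⟨N, hN⟩ := exists_openNormal hU
  haveI : Finite (K ⧸ N.toSubgroup) :=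
    Subgroup.quotient_finite_of_isOpen N.toSubgroup N.isOpen
  have hPG : IsPGroup p (K ⧸ N.toSubgroup) := by
    obtain ⟨n, hn⟩ := hpro N.toSubgroup N.isNormal' N.isOpen
    exact IsPGroup.of_card hn
  have hD : (C.map (QuotientGroup.mk' N.toSubgroup)) ≠ ⊤ := by
    intro h
    have hx2 : QuotientGroup.mk' N.toSubgroup x ∈ C.map (QuotientGroup.mk' N.toSubgroup) :=
      h ▸ Subgroup.mem_top _
    obtain ⟨c, hc, heq⟩ := hx2
    have : c⁻¹ * x ∈ N.toSubgroup := by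
      rw [← QuotientGroup.eq]
      exact heq
    have hmem := hN (N.toSubgroup.inv_mem this)
    simp only [Set.mem_preimage, Set.mem_compl_iff, SetLike.mem_coe] at hmem
    have hcx : x * (c⁻¹ * x)⁻¹ = c := by group
    rw [hcx] at hmem
    exact hmem hc
  obtain ⟨g, ghom, gvan, gne⟩ := finL (Nat.card (K ⧸ N.toSubgroup)) rfl hPG hD
  refine ⟨g ∘ QuotientGroup.mk' N.toSubgroup, ⟨fun a b => by simp [ghom], ?_⟩, ?_, ?_⟩
  · have hle : N.toSubgroup ≤ zeroSub (g ∘ QuotientGroup.mk' N.toSubgroup)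
        (fun a b => by simp [ghom]) := by
      intro n hn
      show g (QuotientGroup.mk' N.toSubgroup n) = 0
      have : QuotientGroup.mk' N.toSubgroup n = 1 := by
        rw [← QuotientGroup.ker_mk' N.toSubgroup] at hn
        exact hn
      rw [this]
      exact phom_one ghom
    exact Subgroup.isOpen_mono hle N.isOpen
  · intro c hc
    exact gvan _ (Subgroup.mem_map_of_mem _ hc)
  · intro h
    rw [Function.ne_iff] at gne
    obtain ⟨q, hq⟩ := gne
    obtain ⟨y, rfl⟩ := QuotientGroup.mk'_surjective N.toSubgroup q
    exact hq (congrFun h y)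

end PDual2

section PDual3

open Pointwise

variable {p : ℕ} [Fact p.Prime]

/-- If only the zero element of the dual kills `T`, then `T` topologically generates. -/
private lemma topGen_of_detect {K : Type w} [Group K] [TopologicalSpace K]
    [IsTopologicalGroup K] [CompactSpace K] [T2Space K] [TotallyDisconnectedSpace K]
    (hpro : IsProP p K) (T : Set K)
    (hdet : ∀ f ∈ pdual p K, (∀ x ∈ T, f x = 0) → f = 0) : TopGenerates K T := by
  by_contra hng
  have hC : (Subgroup.closure T).topologicalClosure ≠ ⊤ := by
    intro h
    apply hng
    show closure ((Subgroup.closure T : Subgroup K) : Set K) = Set.univ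
    rw [← Subgroup.topologicalClosure_coe, h, Subgroup.coe_top]
  obtain ⟨f, hf, hvan, hne⟩ := exists_pdual_of_ne_top hpro
    (Subgroup.isClosed_topologicalClosure _) hC
  refine hne (hdet f hf fun x hx => hvan x ?_)
  exact Subgroup.le_topologicalClosure _ (Subgroup.subset_closure hx)

/-- P4: `K` has a topological generating set of size at most `finrank (pdual p K)`. -/
private lemma dRank_le_finrank_pdual {K : Type w} [Group K] [TopologicalSpace K]
    [IsTopologicalGroup K] [CompactSpace K] [T2Space K] [TotallyDisconnectedSpace K]
    (hpro : IsProP p K) [Module.Finite (ZMod p) (pdual p K)] :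
    dRank K ≤ (Module.finrank (ZMod p) (pdual p K) : ℕ∞) := by
  classical
  set V := pdual p K
  let Ev : K → Module.Dual (ZMod p) V := fun x =>
    { toFun := fun f => f.1 x
      map_add' := fun f g => rfl
      map_smul' := fun c f => rfl }
  have hspan : Submodule.span (ZMod p) (Set.range Ev) = ⊤ := by
    apply Submodule.span_eq_top_of_ne_zero
    intro χ hχ
    have : χ.1 ≠ 0 := fun h => hχ (Subtype.ext h)
    rw [Function.ne_iff] at this
    obtain ⟨x, hx⟩ := this
    exact ⟨Ev x, Set.mem_range_self x, hx⟩
  -- extract a basis of the dual inside the range of Ev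
  have hli : LinearIndepOn (ZMod p) id (∅ : Set (Module.Dual (ZMod p) V)) :=
    linearIndepOn_empty _ _
  set b := hli.extend (Set.empty_subset (Set.range Ev)) with hbdef
  have hbsub : b ⊆ Set.range Ev := hli.extend_subset _
  have hbind : LinearIndependent (ZMod p) ((↑) : b → Module.Dual (ZMod p) V) :=
    (hli.linearIndepOn_extend _).linearIndependent
  have hbspan : Submodule.span (ZMod p) b = ⊤ := by
    rw [hli.span_extend_eq_span]
    exact hspan
  have hbfin : b.Finite := by
    haveI : Module.Finite (ZMod p) (Module.Dual (ZMod p) V) := inferInstance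
    exact hbind.setFinite
  haveI := hbfin.fintype
  let bas : Module.Basis b (ZMod p) (Module.Dual (ZMod p) V) :=
    Module.Basis.mk hbind (by rw [Subtype.range_coe, hbspan])
  have hcard : Fintype.card b = Module.finrank (ZMod p) V := by
    rw [← Module.finrank_eq_card_basis bas, Subspace.dual_finrank_eq]
  -- choose preimages
  choose gx hgx using fun ℓ : b => hbsub ℓ.2
  set T : Set K := Set.range gx with hTdef
  have hdet : ∀ f ∈ pdual p K, (∀ x ∈ T, f x = 0) → f = 0 := by
    intro f hf h0
    have hker : ∀ ℓ ∈ b, (Module.Dual.eval (ZMod p) V) ⟨f, hf⟩ ℓ = 0 := by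
      intro ℓ hℓ
      have := hgx ⟨ℓ, hℓ⟩
      have hx0 : f (gx ⟨ℓ, hℓ⟩) = 0 := h0 _ (Set.mem_range_self _)
      calc (Module.Dual.eval (ZMod p) V) ⟨f, hf⟩ ℓ = ℓ ⟨f, hf⟩ := rfl
        _ = Ev (gx ⟨ℓ, hℓ⟩) ⟨f, hf⟩ := by rw [this]
        _ = 0 := hx0
    have : Submodule.span (ZMod p) b ≤ LinearMap.ker ((Module.Dual.eval (ZMod p) V) ⟨f, hf⟩) := by
      rw [Submodule.span_le]
      intro ℓ hℓ
      exact hker ℓ hℓ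
    rw [hbspan, top_le_iff, LinearMap.ker_eq_top] at this
    have hfz : (⟨f, hf⟩ : V) = 0 := by
      have hinj := (Module.evalEquiv (ZMod p) V).injective
      apply hinj
      rw [map_zero, Module.evalEquiv_apply]
      exact this
    exact congrArg Subtype.val hfz
  have hgen : TopGenerates K T := topGen_of_detect hpro T hdet
  calc dRank K ≤ T.encard := dRank_le_encard hgen
    _ ≤ (Fintype.card b : ℕ∞) := by
        have : T.encard ≤ (Set.univ : Set b).encard := by
          rw [hTdef, ← Set.image_univ]
          exact Set.encard_image_le _ _
        simpa [Set.encard_univ] using this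
    _ = _ := by rw [hcard]

end PDual3

section PDual4

open Pointwise

variable {p : ℕ} [Fact p.Prime]

/-- Pull-back of duals along a continuous homomorphism. -/
private def pdualComp {K : Type*} {L : Type*} [Group K] [TopologicalSpace K]
    [IsTopologicalGroup K] [Group L] [TopologicalSpace L] [IsTopologicalGroup L]
    (π : K →* L) (hπ : Continuous π) : pdual p L →ₗ[ZMod p] pdual p K where
  toFun f := ⟨f.1 ∘ π, fun x y => by simp only [Function.comp_apply, map_mul, f.2.1],
    by exact hπ.isOpen_preimage _ f.2.2⟩
  map_add' f g := rfl
  map_smul' c f := rfl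

private lemma pdualComp_injective {K : Type*} {L : Type*} [Group K] [TopologicalSpace K]
    [IsTopologicalGroup K] [Group L] [TopologicalSpace L] [IsTopologicalGroup L]
    {π : K →* L} {hπ : Continuous π} (hs : Function.Surjective π) :
    Function.Injective (pdualComp (p := p) π hπ) := by
  intro f g h
  apply Subtype.ext
  funext y
  obtain ⟨x, rfl⟩ := hs y
  exact congrFun (congrArg Subtype.val h) x

private lemma pdual_wd {K : Type*} {L : Type*} [Group K] [Group L]
    (π : K →* L) {f : K → ZMod p} (hfhom : ∀ x y, f (x * y) = f x + f y)
    (hker : ∀ x, π x = 1 → f x = 0) :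
    ∀ x y, π x = π y → f x = f y := by
  intro x y hxy
  have h1 : π (x⁻¹ * y) = 1 := by rw [map_mul, map_inv, hxy, inv_mul_cancel]
  have h2 := hker _ h1
  rw [hfhom, phom_inv hfhom] at h2
  exact (neg_add_eq_zero.mp h2)

/-- Descend an element of the dual along a continuous surjection whose kernel it kills. -/
private lemma pdual_descend {K : Type*} {L : Type*} [Group K] [TopologicalSpace K]
    [IsTopologicalGroup K] [CompactSpace K] [Group L] [TopologicalSpace L] [IsTopologicalGroup L]
    [T2Space L] (π : K →* L) (hπc : Continuous π) (hπs : Function.Surjective π)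
    {f : K → ZMod p} (hf : f ∈ pdual p K) (hker : ∀ x, π x = 1 → f x = 0) :
    ∃ f' ∈ pdual p L, f' ∘ π = f := by
  have wd := pdual_wd π hf.1 hker
  set f' : L → ZMod p := fun y => f (Function.surjInv hπs y) with hf'def
  have hcomp : ∀ x, f' (π x) = f x := fun x =>
    wd _ _ (Function.surjInv_eq hπs (π x))
  have hhom : ∀ a b : L, f' (a * b) = f' a + f' b := by
    intro a b
    obtain ⟨x, rfl⟩ := hπs a
    obtain ⟨y, rfl⟩ := hπs b
    rw [← map_mul, hcomp, hcomp, hcomp, hf.1]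
  have hzopen : IsOpen {y : L | f' y = 0} := by
    rw [← isClosed_compl_iff]
    have himg : {y : L | f' y = 0}ᶜ = π '' ({x : K | f x = 0}ᶜ) := by
      ext y
      simp only [Set.mem_compl_iff, Set.mem_setOf_eq, Set.mem_image]
      constructor
      · intro hy
        obtain ⟨x, rfl⟩ := hπs y
        exact ⟨x, by rwa [hcomp] at hy, rfl⟩
      · rintro ⟨x, hx, rfl⟩
        rwa [hcomp]
    rw [himg]
    have hcpt : IsCompact ({x : K | f x = 0}ᶜ) :=
      (hf.2.isClosed_compl).isCompact
    exact (hcpt.image hπc).isClosed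
  exact ⟨f', ⟨hhom, hzopen⟩, funext hcomp⟩

/-- The image of a topological generating set generates the image. -/
private lemma topGen_image {K : Type*} {L : Type*} [Group K] [TopologicalSpace K]
    [IsTopologicalGroup K] [CompactSpace K] [Group L] [TopologicalSpace L] [IsTopologicalGroup L]
    (π : K →* L) (hc : Continuous π) (hs : Function.Surjective π)
    {X : Set K} (hX : TopGenerates K X) : TopGenerates L (π '' X) := by
  show closure ((Subgroup.closure (π '' X) : Subgroup L) : Set L) = Set.univ
  apply Set.eq_univ_of_univ_subset
  have h0 : (Set.univ : Set L) = π '' (closure ((Subgroup.closure X : Subgroup K) : Set K)) := by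
    rw [hX, Set.image_univ]
    exact (Set.range_eq_univ.mpr hs).symm
  rw [h0]
  calc π '' (closure ((Subgroup.closure X : Subgroup K) : Set K))
      ⊆ closure (π '' ((Subgroup.closure X : Subgroup K) : Set K)) :=
        image_closure_subset_closure_image hc
    _ = closure ((Subgroup.closure (π '' X) : Subgroup L) : Set L) := by
        rw [← Subgroup.coe_map, MonoidHom.map_closure]

/-- Closed subgroups of pro-`p` groups are pro-`p`. -/
private lemma isProP_subgroup {K : Type*} [Group K] [TopologicalSpace K] [IsTopologicalGroup K]
    [CompactSpace K] [T2Space K] [TotallyDisconnectedSpace K] (hpro : IsProP p K)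
    (B : Subgroup K) : IsProP p ↥B := by
  intro N hNnorm hNopen
  obtain ⟨V, hVopen, hVeq⟩ := isOpen_induced_iff.mp hNopen
  have h1V : (1 : K) ∈ V := by
    have h1N : ((1 : ↥B) : K) ∈ V := by
      have : (1 : ↥B) ∈ Subtype.val ⁻¹' V := by rw [hVeq]; exact N.one_mem
      exact this
    simpa using h1N
  obtain ⟨W, hW⟩ := exists_openNormal (IsOpen.mem_nhds hVopen h1V)
  haveI : Finite (K ⧸ W.toSubgroup) :=
    Subgroup.quotient_finite_of_isOpen W.toSubgroup W.isOpen
  have hPG : IsPGroup p (K ⧸ W.toSubgroup) := by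
    obtain ⟨n, hn⟩ := hpro W.toSubgroup W.isNormal' W.isOpen
    exact IsPGroup.of_card hn
  set ψ : ↥B →* K ⧸ W.toSubgroup := (QuotientGroup.mk' W.toSubgroup).comp B.subtype with hψ
  have hker : ψ.ker ≤ N := by
    intro b hb
    have hbW : (b : K) ∈ W.toSubgroup := by
      have : QuotientGroup.mk' W.toSubgroup (b : K) = 1 := hb
      rwa [← QuotientGroup.ker_mk' W.toSubgroup]
    have hbV : (b : K) ∈ V := hW hbW
    have : b ∈ Subtype.val ⁻¹' V := hbV
    rwa [hVeq] at this
  let e := QuotientGroup.quotientKerEquivRange ψ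
  haveI : Finite (↥B ⧸ ψ.ker) := Finite.of_equiv _ e.symm.toEquiv
  have hPGq : IsPGroup p (↥B ⧸ ψ.ker) := by
    have hrange : IsPGroup p ψ.range := IsPGroup.to_subgroup hPG ψ.range
    intro q
    obtain ⟨n, hn⟩ := hrange (e q)
    refine ⟨n, e.injective ?_⟩
    rw [map_pow, hn, map_one]
  obtain ⟨k, hk⟩ := IsPGroup.iff_card.mp hPGq
  have hkerindex : ψ.ker.index = p ^ k := hk
  have hdvd : N.index ∣ p ^ k := hkerindex ▸ Subgroup.index_dvd_of_le hker
  obtain ⟨m, -, hm⟩ := (Nat.dvd_prime_pow (Fact.out : p.Prime)).mp hdvd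
  exact ⟨m, hm⟩

/-- Products of pro-`p` groups are pro-`p`. -/
private lemma isProP_pi {I : Type u} {G : I → Type v} [∀ i, Group (G i)]
    [∀ i, TopologicalSpace (G i)] [∀ i, IsTopologicalGroup (G i)] [∀ i, CompactSpace (G i)]
    [∀ i, T2Space (G i)] [∀ i, TotallyDisconnectedSpace (G i)]
    (hpro : ∀ i, IsProP p (G i)) : IsProP p (∀ i, G i) := by
  intro N hnorm hopen
  have h1 : (1 : ∀ i, G i) ∈ (N : Set _) := N.one_mem
  obtain ⟨S, u, hu, hbox⟩ := isOpen_pi_iff.mp hopen 1 h1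
  have hex : ∀ i : {i // i ∈ S}, ∃ Ni : OpenNormalSubgroup (G i.1), (Ni : Set (G i.1)) ⊆ u i.1 :=
    fun i => exists_openNormal (IsOpen.mem_nhds (hu i.1 i.2).1 (hu i.1 i.2).2)
  choose Ni hNi using hex
  haveI : ∀ i : {i // i ∈ S}, Finite (G i.1 ⧸ (Ni i).toSubgroup) :=
    fun i => Subgroup.quotient_finite_of_isOpen _ (Ni i).isOpen
  set ψ : (∀ i, G i) →* (∀ i : {i // i ∈ S}, G i.1 ⧸ (Ni i).toSubgroup) :=
    MonoidHom.mk' (fun y => fun i => QuotientGroup.mk (y i.1)) (by intro a b; rfl) with hψdef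
  have hker : ψ.ker ≤ N := by
    intro y hy
    apply hbox
    intro i hi
    have : QuotientGroup.mk (s := (Ni ⟨i, hi⟩).toSubgroup) (y i) = 1 := congrFun hy ⟨i, hi⟩
    have hyi : y i ∈ (Ni ⟨i, hi⟩).toSubgroup := by
      rwa [← QuotientGroup.ker_mk' (Ni ⟨i, hi⟩).toSubgroup]
    exact hNi ⟨i, hi⟩ hyi
  -- target has p-power cardinality
  have hcard : ∀ i : {i // i ∈ S}, ∃ n : ℕ, Nat.card (G i.1 ⧸ (Ni i).toSubgroup) = p ^ n :=
    fun i => hpro i.1 (Ni i).toSubgroup (Ni i).isNormal' (Ni i).isOpen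
  choose nn hnn using hcard
  have htarget : Nat.card (∀ i : {i // i ∈ S}, G i.1 ⧸ (Ni i).toSubgroup)
      = p ^ (∑ i, nn i) := by
    rw [Nat.card_pi]
    rw [Finset.prod_congr rfl (fun i _ => hnn i)]
    rw [Finset.prod_pow_eq_pow_sum]
  let e := QuotientGroup.quotientKerEquivRange ψ
  have hqcard : Nat.card ((∀ i, G i) ⧸ ψ.ker) = Nat.card ψ.range := Nat.card_congr e.toEquiv
  have hdvd1 : Nat.card ψ.range ∣ p ^ (∑ i, nn i) := by
    rw [← htarget]
    exact Subgroup.card_subgroup_dvd_card ψ.range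
  have hdvd : N.index ∣ p ^ (∑ i, nn i) := by
    have h2 : ψ.ker.index ∣ p ^ (∑ i, nn i) := by
      show Nat.card _ ∣ _
      rw [hqcard]  -- index is Nat.card of quotient
      exact hdvd1
    exact dvd_trans (Subgroup.index_dvd_of_le hker) h2
  obtain ⟨m, -, hm⟩ := (Nat.dvd_prime_pow (Fact.out : p.Prime)).mp hdvd
  exact ⟨m, hm⟩

end PDual4

open Pointwise

/-- **Lemma 2.1(a).** Let `G = lim Gᵢ` be the inverse limit of an inverse system
`{Gᵢ, φᵢⱼ, I}` of pro-`p` groups over a directed poset `I`, and suppose there is a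
constant `d` with `d(Gᵢ) = d` for all `i`.  If `d(G) = d`, then some projection
`G → Gⱼ` is surjective. -/
theorem invLim_exists_surjective_projection
    {p : ℕ} [Fact p.Prime]
    {I : Type u} [Preorder I] [IsDirected I (· ≤ ·)] [Nonempty I]
    (G : I → Type v) [∀ i, Group (G i)] [∀ i, TopologicalSpace (G i)]
    [∀ i, IsTopologicalGroup (G i)] [∀ i, CompactSpace (G i)] [∀ i, T2Space (G i)]
    [∀ i, TotallyDisconnectedSpace (G i)]
    (hpro : ∀ i, IsProP p (G i))
    (φ : ∀ i j : I, j ≤ i → (G i →* G j))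
    (hcont : ∀ (i j : I) (h : j ≤ i), Continuous (φ i j h))
    (hid : ∀ i : I, φ i i le_rfl = MonoidHom.id (G i))
    (hcomp : ∀ (i j k : I) (hij : j ≤ i) (hjk : k ≤ j),
      (φ j k hjk).comp (φ i j hij) = φ i k (hjk.trans hij))
    (d : ℕ)
    (hd : ∀ i, dRank (G i) = (d : ℕ∞))
    (hG : dRank ↥(invLim G φ) = (d : ℕ∞)) :
    ∃ j : I, Function.Surjective (invLimProj G φ j) := by
  classical
  by_contra hns
  push_neg at hns
  -- the inverse limit is a closed subgroup of the product
  have hGclosed : IsClosed ((invLim G φ : Subgroup (∀ i, G i)) : Set (∀ i, G i)) := by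
    have heq : ((invLim G φ : Subgroup (∀ i, G i)) : Set (∀ i, G i)) =
        ⋂ (i : I) (j : I) (h : j ≤ i), {x : ∀ i, G i | φ i j h (x i) = x j} := by
      ext x
      simp only [Set.mem_iInter, Set.mem_setOf_eq, SetLike.mem_coe]
      rfl
    rw [heq]
    exact isClosed_iInter fun i => isClosed_iInter fun j => isClosed_iInter fun h =>
      isClosed_eq ((hcont i j h).comp (continuous_apply i)) (continuous_apply j)
  haveI : CompactSpace ↥(invLim G φ) := isCompact_iff_compactSpace.mp hGclosed.isCompact
  have hπcont : ∀ j, Continuous (invLimProj G φ j) := fun j =>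
    (continuous_apply j).comp continuous_subtype_val
  -- the trivial case d = 0
  rcases Nat.eq_zero_or_pos d with hd0 | hdpos
  · subst hd0
    obtain ⟨j⟩ := ‹Nonempty I›
    apply hns j
    obtain ⟨X, hXgen, hXfin, hXcard⟩ := exists_gen_of_dRank_le (le_of_eq (hd j))
    have hX0 : X = ∅ := (Set.ncard_eq_zero hXfin).mp (Nat.le_zero.mp hXcard)
    subst hX0
    have huniv : closure ((Subgroup.closure (∅ : Set (G j)) : Subgroup (G j)) : Set (G j))
        = Set.univ := hXgen
    rw [Subgroup.closure_empty, Subgroup.coe_bot, IsClosed.closure_eq isClosed_singleton]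
      at huniv
    intro y
    refine ⟨1, ?_⟩
    rw [map_one]
    have hy : y ∈ ({1} : Set (G j)) := huniv ▸ Set.mem_univ y
    exact (Set.mem_singleton_iff.mp hy).symm
  -- main case
  have hproPi : IsProP p (∀ i, G i) := isProP_pi hpro
  have hproG : IsProP p ↥(invLim G φ) := isProP_subgroup hproPi _
  -- finrank of the dual of the limit is exactly d
  obtain ⟨X, hXgen, hXfin, hXcard⟩ := exists_gen_of_dRank_le hG.le
  obtain ⟨hGMF, hGfr⟩ := pdual_finite (p := p) hXgen hXfin
  haveI := hGMF
  have hGfrle : Module.finrank (ZMod p) (pdual p ↥(invLim G φ)) ≤ d := le_trans hGfr hXcard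
  have hGfrge : d ≤ Module.finrank (ZMod p) (pdual p ↥(invLim G φ)) := by
    have h1 := dRank_le_finrank_pdual hproG
    rw [hG] at h1
    exact_mod_cast h1
  -- every dual element factors through some index
  have hfactor : ∀ f ∈ pdual p ↥(invLim G φ), ∃ j : I,
      ∀ g : ↥(invLim G φ), (g : ∀ i, G i) j = 1 → f g = 0 := by
    intro f hf
    obtain ⟨t, htopen, hteq⟩ := isOpen_induced_iff.mp hf.2
    have h1t : (1 : ∀ i, G i) ∈ t := by
      have h1m : (1 : ↥(invLim G φ)) ∈ Subtype.val ⁻¹' t := by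
        rw [hteq]
        show f 1 = 0
        exact phom_one hf.1
      exact h1m
    obtain ⟨S, uu, hu, hbox⟩ := isOpen_pi_iff.mp htopen 1 h1t
    obtain ⟨j, hj⟩ := S.exists_le
    refine ⟨j, fun g hg => ?_⟩
    have hmem : (g : ∀ i, G i) ∈ t := by
      apply hbox
      intro i hi
      have h2 := g.2 j i (hj i hi)
      rw [hg, map_one] at h2
      rw [← h2]
      exact (hu i hi).2
    have h3 : g ∈ Subtype.val ⁻¹' t := hmem
    rw [hteq] at h3
    exact h3
  have hfactormono : ∀ (j j' : I), j ≤ j' → ∀ f : ↥(invLim G φ) → ZMod p,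
      (∀ g : ↥(invLim G φ), (g : ∀ i, G i) j = 1 → f g = 0) →
      ∀ g : ↥(invLim G φ), (g : ∀ i, G i) j' = 1 → f g = 0 := by
    intro j j' hjj' f hkill g hg
    apply hkill
    have h2 := g.2 j' j hjj'
    rw [hg, map_one] at h2
    exact h2.symm
  -- a common index j0 for a spanning set of the dual
  obtain ⟨nS, fS, hfS⟩ := Module.Finite.exists_fin (R := ZMod p)
    (M := pdual p ↥(invLim G φ))
  choose js hjs using fun k : Fin nS => hfactor _ (fS k).2
  obtain ⟨j0, hj0⟩ := (Finset.univ.image js).exists_le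
  have hj0k : ∀ k, js k ≤ j0 := fun k =>
    hj0 _ (Finset.mem_image_of_mem js (Finset.mem_univ k))
  -- the image subgroup H0
  set H0 : Subgroup (G j0) := (invLimProj G φ j0).range with hH0def
  have hH0cpt : IsCompact (H0 : Set (G j0)) := by
    rw [hH0def, MonoidHom.coe_range]
    exact isCompact_range (hπcont j0)
  haveI : CompactSpace ↥H0 := isCompact_iff_compactSpace.mp hH0cpt
  have hH0closed : IsClosed (H0 : Set (G j0)) := hH0cpt.isClosed
  set π0 : ↥(invLim G φ) →* ↥H0 := (invLimProj G φ j0).rangeRestrict with hπ0def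
  have hπ0c : Continuous π0 := (hπcont j0).subtype_mk _
  have hπ0s : Function.Surjective π0 := (invLimProj G φ j0).rangeRestrict_surjective
  -- the pullback along π0 is surjective
  have hPbsurj : Function.Surjective (pdualComp (p := p) π0 hπ0c) := by
    rw [← LinearMap.range_eq_top, ← top_le_iff, ← hfS, Submodule.span_le]
    rintro _ ⟨k, rfl⟩
    have hkill : ∀ g : ↥(invLim G φ), π0 g = 1 → (fS k).1 g = 0 := by
      intro g hg
      refine hfactormono (js k) j0 (hj0k k) _ (hjs k) g ?_
      exact congrArg Subtype.val hg
    obtain ⟨f', hf', hcomp'⟩ := pdual_descend π0 hπ0c hπ0s (fS k).2 hkill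
    exact ⟨⟨f', hf'⟩, Subtype.ext hcomp'⟩
  -- finrank of the dual of H0 is at least d
  obtain ⟨hH0MF, hH0fr⟩ := pdual_finite (p := p)
    (topGen_image π0 hπ0c hπ0s hXgen) (hXfin.image _)
  haveI := hH0MF
  have hH0frle : Module.finrank (ZMod p) (pdual p ↥H0) ≤ d :=
    le_trans hH0fr (le_trans (Set.ncard_image_le hXfin) hXcard)
  have hH0frge : d ≤ Module.finrank (ZMod p) (pdual p ↥H0) := by
    have h1 : Module.finrank (ZMod p) (pdual p ↥(invLim G φ)) ≤
        Module.finrank (ZMod p) (pdual p ↥H0) := by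
      have h2 := LinearMap.finrank_range_le (pdualComp (p := p) π0 hπ0c)
      rwa [LinearMap.range_eq_top.mpr hPbsurj, finrank_top] at h2
    exact le_trans hGfrge h1
  -- an open normal subgroup W of G j0 on which the whole dual of H0 vanishes
  obtain ⟨nT, fT, hfT⟩ := Module.Finite.exists_fin (R := ZMod p) (M := pdual p ↥H0)
  have hzero : ∀ k : Fin nT, ∃ V : Set (G j0), IsOpen V ∧ (1 : G j0) ∈ V ∧
      ∀ h : ↥H0, (h : G j0) ∈ V → (fT k).1 h = 0 := by
    intro k
    obtain ⟨V, hVopen, hVeq⟩ := isOpen_induced_iff.mp (fT k).2.2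
    refine ⟨V, hVopen, ?_, ?_⟩
    · have h1m : (1 : ↥H0) ∈ Subtype.val ⁻¹' V := by
        rw [hVeq]
        show (fT k).1 1 = 0
        exact phom_one (fT k).2.1
      exact h1m
    · intro h hh
      have h2 : h ∈ Subtype.val ⁻¹' V := hh
      rw [hVeq] at h2
      exact h2
  choose Vk hVkopen hVk1 hVkmem using hzero
  obtain ⟨W, hW⟩ := exists_openNormal (K := G j0)
    ((Filter.iInter_mem).mpr fun k => (hVkopen k).mem_nhds (hVk1 k))
  have hWall : ∀ f' : pdual p ↥H0, ∀ h : ↥H0,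
      (h : G j0) ∈ W.toSubgroup → (f' : ↥H0 → ZMod p) h = 0 := by
    intro f'
    have hf'mem : f' ∈ Submodule.span (ZMod p) (Set.range fT) := by
      rw [hfT]; exact Submodule.mem_top
    refine Submodule.span_induction ?_ ?_ ?_ ?_ hf'mem
    · rintro _ ⟨k, rfl⟩ h hh
      exact hVkmem k h (Set.mem_iInter.mp (hW hh) k)
    · intro h hh
      rfl
    · intro a b _ _ ha hb h hh
      show (a : ↥H0 → ZMod p) h + (b : ↥H0 → ZMod p) h = 0
      rw [ha h hh, hb h hh, add_zero]
    · intro c a _ ha h hh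
      show c * (a : ↥H0 → ZMod p) h = 0
      rw [ha h hh, mul_zero]
  -- eventual image: a point in all the images φ_{i j0}(G i) lies in H0
  have hevent : ∀ x : G j0, (∀ i : {i // j0 ≤ i}, x ∈ Set.range (φ i.1 j0 i.2)) → x ∈ H0 := by
    intro x hx
    set A : I × I → Set (∀ i, G i) := fun pr =>
      {y | ∀ h : pr.2 ≤ pr.1, φ pr.1 pr.2 h (y pr.1) = y pr.2} with hA
    have hAclosed : ∀ pr, IsClosed (A pr) := by
      intro pr
      have heq : A pr = ⋂ h : pr.2 ≤ pr.1,
          {y : ∀ i, G i | φ pr.1 pr.2 h (y pr.1) = y pr.2} := by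
        ext y
        simp only [hA, Set.mem_setOf_eq, Set.mem_iInter]
      rw [heq]
      exact isClosed_iInter fun h =>
        isClosed_eq ((hcont _ _ h).comp (continuous_apply _)) (continuous_apply _)
    have hscpt : IsCompact {y : ∀ i, G i | y j0 = x} :=
      (isClosed_eq (continuous_apply _) continuous_const).isCompact
    have hne : ({y : ∀ i, G i | y j0 = x} ∩ ⋂ pr, A pr).Nonempty := by
      by_contra hempty
      rw [Set.not_nonempty_iff_eq_empty] at hempty
      obtain ⟨t, ht⟩ := hscpt.elim_finite_subfamily_closed A hAclosed hempty
      obtain ⟨mm, hmm⟩ := ((t.image Prod.fst ∪ t.image Prod.snd) ∪ {j0}).exists_le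
      have hmmj0 : j0 ≤ mm := hmm j0 (Finset.mem_union_right _ (Finset.mem_singleton_self j0))
      obtain ⟨gm, hgm⟩ := hx ⟨mm, hmmj0⟩
      set y : ∀ i, G i := fun i => if h : i ≤ mm then φ mm i h gm else 1 with hy
      have hyval : ∀ (i : I) (h : i ≤ mm), y i = φ mm i h gm := by
        intro i h
        rw [hy]
        exact dif_pos h
      have hymem : y ∈ {y : ∀ i, G i | y j0 = x} ∩ ⋂ pr ∈ t, A pr := by
        constructor
        · show y j0 = x
          rw [hyval j0 hmmj0]
          exact hgm
        · rw [Set.mem_iInter₂]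
          intro pr hpr
          intro h
          have h1 : pr.1 ≤ mm := hmm _ (Finset.mem_union_left _
            (Finset.mem_union_left _ (Finset.mem_image_of_mem Prod.fst hpr)))
          have h2 : pr.2 ≤ mm := hmm _ (Finset.mem_union_left _
            (Finset.mem_union_right _ (Finset.mem_image_of_mem Prod.snd hpr)))
          rw [hyval pr.1 h1, hyval pr.2 h2]
          exact DFunLike.congr_fun (hcomp mm pr.1 pr.2 h1 h) gm
      rw [ht] at hymem
      exact hymem
    obtain ⟨y, hyS, hyA⟩ := hne
    have hyinv : y ∈ invLim G φ := by
      intro i j h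
      exact (Set.mem_iInter.mp hyA (i, j)) h
    exact ⟨⟨y, hyinv⟩, hyS⟩
  -- find i0 with image inside H0 * W
  have hexistsi : ∃ i0 : I, ∃ hle : j0 ≤ i0,
      Set.range (φ i0 j0 hle) ⊆ (H0 : Set (G j0)) * (W.toSubgroup : Set (G j0)) := by
    set U := (H0 : Set (G j0)) * (W.toSubgroup : Set (G j0)) with hU
    have hUopen : IsOpen U := W.isOpen.mul_left
    have hUH : (H0 : Set (G j0)) ⊆ U := by
      intro x hx
      rw [hU]
      refine ⟨x, hx, 1, W.toSubgroup.one_mem, mul_one x⟩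
    set C : {i // j0 ≤ i} → Set (G j0) := fun i => Set.range (φ i.1 j0 i.2) with hC
    have hCclosed : ∀ i, IsClosed (C i) := fun i => (isCompact_range (hcont _ _ _)).isClosed
    have hempty : (Set.univ : Set (G j0)) ∩ ⋂ i, (C i ∩ Uᶜ) = ∅ := by
      rw [Set.univ_inter, Set.eq_empty_iff_forall_notMem]
      intro x hx
      rw [Set.mem_iInter] at hx
      have hxC : x ∈ H0 := hevent x fun i => (hx i).1
      exact (hx ⟨j0, le_refl j0⟩).2 (hUH hxC)
    obtain ⟨t, ht⟩ := isCompact_univ.elim_finite_subfamily_closed _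
      (fun i => (hCclosed i).inter hUopen.isClosed_compl) hempty
    obtain ⟨i0, hi0⟩ := ((t.image Subtype.val) ∪ {j0}).exists_le
    have hj0i0 : j0 ≤ i0 := hi0 j0 (Finset.mem_union_right _ (Finset.mem_singleton_self j0))
    refine ⟨i0, hj0i0, ?_⟩
    intro x hx
    by_contra hxU
    have hxmem : x ∈ (Set.univ : Set (G j0)) ∩ ⋂ i ∈ t, (C i ∩ Uᶜ) := by
      refine ⟨trivial, Set.mem_iInter₂.mpr fun i hi => ⟨?_, hxU⟩⟩
      obtain ⟨gm, rfl⟩ := hx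
      have hii0 : i.1 ≤ i0 := hi0 _ (Finset.mem_union_left _
        (Finset.mem_image_of_mem Subtype.val hi))
      exact ⟨φ i0 i.1 hii0 gm, DFunLike.congr_fun (hcomp i0 i.1 j0 hii0 i.2) gm⟩
    rw [ht] at hxmem
    exact hxmem
  obtain ⟨i0, hle0, hBsub⟩ := hexistsi
  set B : Subgroup (G j0) := (φ i0 j0 hle0).range with hBdef
  have hBcpt : IsCompact (B : Set (G j0)) := by
    rw [hBdef, MonoidHom.coe_range]
    exact isCompact_range (hcont _ _ _)
  haveI : CompactSpace ↥B := isCompact_iff_compactSpace.mp hBcpt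
  have hH0B : H0 ≤ B := by
    rintro x ⟨g, rfl⟩
    exact ⟨invLimProj G φ i0 g, g.2 i0 j0 hle0⟩
  have hinclcont : Continuous (Subgroup.inclusion hH0B) :=
    continuous_subtype_val.subtype_mk _
  -- restriction of duals is surjective (extension via W)
  have hressurj : Function.Surjective
      (pdualComp (p := p) (Subgroup.inclusion hH0B) hinclcont) := by
    intro χ'
    have hdecomp : ∀ b : ↥B, ∃ h, h ∈ H0 ∧ ∃ w, w ∈ W.toSubgroup ∧ h * w = (b : G j0) := by
      intro b
      have hb : (b : G j0) ∈ (H0 : Set (G j0)) * (W.toSubgroup : Set (G j0)) := by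
        apply hBsub
        rw [← MonoidHom.coe_range]
        exact b.2
      exact hb
    choose hb hbH wb hbW hbeq using hdecomp
    set F : ↥B → ZMod p := fun b => (χ' : ↥H0 → ZMod p) ⟨hb b, hbH b⟩ with hF
    have hwd : ∀ (b : ↥B) (h w : G j0) (hh : h ∈ H0), w ∈ W.toSubgroup →
        (b : G j0) = h * w → F b = (χ' : ↥H0 → ZMod p) ⟨h, hh⟩ := by
      intro b h w hh hw heq
      have hmemH : h⁻¹ * hb b ∈ H0 := H0.mul_mem (H0.inv_mem hh) (hbH b)
      have hmemW : h⁻¹ * hb b ∈ W.toSubgroup := by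
        have e1 : hb b * wb b = h * w := (hbeq b).trans heq
        have e2 : hb b = h * w * (wb b)⁻¹ := eq_mul_inv_iff_mul_eq.mpr e1
        have e3 : h⁻¹ * hb b = w * (wb b)⁻¹ := by rw [e2]; group
        rw [e3]
        exact W.toSubgroup.mul_mem hw (W.toSubgroup.inv_mem (hbW b))
      have hsplit : (⟨hb b, hbH b⟩ : ↥H0) = ⟨h, hh⟩ * ⟨h⁻¹ * hb b, hmemH⟩ := by
        apply Subtype.ext
        show hb b = h * (h⁻¹ * hb b)
        group
      rw [hF]
      show (χ' : ↥H0 → ZMod p) ⟨hb b, hbH b⟩ = _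
      rw [hsplit, χ'.2.1, hWall χ' ⟨h⁻¹ * hb b, hmemH⟩ hmemW, add_zero]
    have hFhom : ∀ a b : ↥B, F (a * b) = F a + F b := by
      intro a b
      have hmemH : hb a * hb b ∈ H0 := H0.mul_mem (hbH a) (hbH b)
      have hconj : (hb b)⁻¹ * wb a * hb b ∈ W.toSubgroup := by
        have := W.isNormal'.conj_mem _ (hbW a) (hb b)⁻¹
        rwa [inv_inv] at this
      have hmemW : ((hb b)⁻¹ * wb a * hb b) * wb b ∈ W.toSubgroup :=
        W.toSubgroup.mul_mem hconj (hbW b)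
      have heqab : ((a * b : ↥B) : G j0) =
          (hb a * hb b) * (((hb b)⁻¹ * wb a * hb b) * wb b) := by
        have : ((a * b : ↥B) : G j0) = (a : G j0) * (b : G j0) := rfl
        rw [this, ← hbeq a, ← hbeq b]
        group
      rw [hwd (a * b) _ _ hmemH hmemW heqab]
      have hsplit : (⟨hb a * hb b, hmemH⟩ : ↥H0) = ⟨hb a, hbH a⟩ * ⟨hb b, hbH b⟩ := rfl
      rw [hsplit, χ'.2.1]
    have hFopen : IsOpen {b : ↥B | F b = 0} := by
      have heq : {b : ↥B | F b = 0} = Subtype.val ⁻¹'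
          ((Subtype.val '' {h : ↥H0 | (χ' : ↥H0 → ZMod p) h = 0}) *
            (W.toSubgroup : Set (G j0))) := by
        ext b
        simp only [Set.mem_setOf_eq, Set.mem_preimage]
        constructor
        · intro h0
          exact ⟨hb b, ⟨⟨hb b, hbH b⟩, h0, rfl⟩, wb b, hbW b, hbeq b⟩
        · rintro ⟨_, ⟨z, hz0, rfl⟩, w, hw, heq2⟩
          rw [hwd b _ _ z.2 hw heq2.symm]
          exact hz0
      rw [heq]
      exact (W.isOpen.mul_left).preimage continuous_subtype_val
    refine ⟨⟨F, hFhom, hFopen⟩, ?_⟩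
    apply Subtype.ext
    funext h
    show F (Subgroup.inclusion hH0B h) = (χ' : ↥H0 → ZMod p) h
    have heq1 : ((Subgroup.inclusion hH0B h : ↥B) : G j0) = (h : G j0) * 1 := (mul_one _).symm
    rw [hwd _ _ _ h.2 W.toSubgroup.one_mem heq1]
  -- B = H0
  have hBeq : B = H0 := by
    by_contra hne
    have hlt : H0 < B := lt_of_le_of_ne hH0B (Ne.symm hne)
    obtain ⟨x, hxB, hxH⟩ := SetLike.exists_of_lt hlt
    have hCBclosed : IsClosed ((H0.subgroupOf B : Subgroup ↥B) : Set ↥B) := by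
      have heq : ((H0.subgroupOf B : Subgroup ↥B) : Set ↥B) =
          Subtype.val ⁻¹' (H0 : Set (G j0)) := rfl
      rw [heq]
      exact hH0closed.preimage continuous_subtype_val
    have hCBne : H0.subgroupOf B ≠ ⊤ := by
      intro h
      have hx2 : (⟨x, hxB⟩ : ↥B) ∈ H0.subgroupOf B := h ▸ Subgroup.mem_top _
      rw [Subgroup.mem_subgroupOf] at hx2
      exact hxH hx2
    obtain ⟨f0, hf0mem, hf0van, hf0ne⟩ :=
      exists_pdual_of_ne_top (isProP_subgroup (hpro j0) B) hCBclosed hCBne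
    -- dual of B has dimension at most d
    obtain ⟨Xi, hXigen, hXifin, hXicard⟩ := exists_gen_of_dRank_le (le_of_eq (hd i0))
    have hrrc : Continuous (φ i0 j0 hle0).rangeRestrict := (hcont i0 j0 hle0).subtype_mk _
    obtain ⟨hBMF, hBfr⟩ := pdual_finite (p := p)
      (topGen_image (φ i0 j0 hle0).rangeRestrict hrrc
        (φ i0 j0 hle0).rangeRestrict_surjective hXigen) (hXifin.image _)
    haveI := hBMF
    have hBfrle : Module.finrank (ZMod p) (pdual p ↥B) ≤ d :=
      le_trans hBfr (le_trans (Set.ncard_image_le hXifin) hXicard)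
    -- the restriction map has trivial kernel
    set res := pdualComp (p := p) (Subgroup.inclusion hH0B) hinclcont with hres
    have hker0 : LinearMap.ker res = ⊥ := by
      have h1 : Module.finrank (ZMod p) (LinearMap.range res) =
          Module.finrank (ZMod p) (pdual p ↥H0) := by
        rw [LinearMap.range_eq_top.mpr hressurj, finrank_top]
      have h2 := LinearMap.finrank_range_add_finrank_ker res
      have h3 : Module.finrank (ZMod p) (LinearMap.ker res) = 0 := by omega
      exact Submodule.finrank_eq_zero.mp h3
    have hf0k : (⟨f0, hf0mem⟩ : pdual p ↥B) ∈ LinearMap.ker res := by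
      rw [LinearMap.mem_ker]
      apply Subtype.ext
      funext h
      show f0 (Subgroup.inclusion hH0B h) = 0
      apply hf0van
      rw [Subgroup.mem_subgroupOf]
      exact h.2
    rw [hker0, Submodule.mem_bot] at hf0k
    exact hf0ne (congrArg Subtype.val hf0k)
  -- the final contradiction
  set uu : G i0 →* ↥H0 := (φ i0 j0 hle0).codRestrict H0
    (fun g => hBeq ▸ (⟨g, rfl⟩ : φ i0 j0 hle0 g ∈ (φ i0 j0 hle0).range)) with huu
  have huuc : Continuous uu := (hcont i0 j0 hle0).subtype_mk _
  have huus : Function.Surjective uu := by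
    intro h
    have hmem : (h : G j0) ∈ B := hBeq.symm ▸ h.2
    obtain ⟨g, hg⟩ := hmem
    exact ⟨g, Subtype.ext hg⟩
  -- dual of G i0
  obtain ⟨Xi, hXigen, hXifin, hXicard⟩ := exists_gen_of_dRank_le (le_of_eq (hd i0))
  obtain ⟨hGiMF, hGifr⟩ := pdual_finite (p := p) hXigen hXifin
  haveI := hGiMF
  have hGifrle : Module.finrank (ZMod p) (pdual p (G i0)) ≤ d := le_trans hGifr hXicard
  set Pu := pdualComp (p := p) uu huuc with hPu
  have hPuinj : Function.Injective Pu := pdualComp_injective huus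
  have hPusurj : Function.Surjective Pu := by
    rw [← LinearMap.range_eq_top]
    apply Submodule.eq_top_of_finrank_eq
    have h1 : Module.finrank (ZMod p) (LinearMap.range Pu) =
        Module.finrank (ZMod p) (pdual p ↥H0) := LinearMap.finrank_range_of_inj hPuinj
    have h2 : Module.finrank (ZMod p) (LinearMap.range Pu) ≤
        Module.finrank (ZMod p) (pdual p (G i0)) := Submodule.finrank_le _
    omega
  -- a nonzero dual element of G i0 vanishing on the image of the limit
  have hHi0ne : (invLimProj G φ i0).range ≠ ⊤ := by
    intro h
    exact hns i0 (MonoidHom.range_eq_top.mp h)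
  have hHi0closed : IsClosed (((invLimProj G φ i0).range : Subgroup (G i0)) : Set (G i0)) := by
    rw [MonoidHom.coe_range]
    exact (isCompact_range (hπcont i0)).isClosed
  obtain ⟨f1, hf1mem, hf1van, hf1ne⟩ :=
    exists_pdual_of_ne_top (hpro i0) hHi0closed hHi0ne
  obtain ⟨χ', hχ'⟩ := hPusurj ⟨f1, hf1mem⟩
  have hχ'0 : ∀ h : ↥H0, (χ' : ↥H0 → ZMod p) h = 0 := by
    intro h
    obtain ⟨g0, hg0⟩ := h.2
    have hu0 : uu (invLimProj G φ i0 g0) = h := by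
      apply Subtype.ext
      show φ i0 j0 hle0 ((g0 : ∀ i, G i) i0) = (h : G j0)
      rw [g0.2 i0 j0 hle0]
      exact hg0
    have hc := congrFun (congrArg Subtype.val hχ') (invLimProj G φ i0 g0)
    have hc2 : (χ' : ↥H0 → ZMod p) (uu (invLimProj G φ i0 g0)) =
        f1 (invLimProj G φ i0 g0) := hc
    rw [hu0] at hc2
    rw [hc2]
    exact hf1van _ ⟨g0, rfl⟩
  have hχ'z : χ' = 0 := Subtype.ext (funext hχ'0)
  rw [hχ'z, map_zero] at hχ'
  exact hf1ne (congrArg Subtype.val hχ').symm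
end

section
/- Let (I, ≤) be a directed poset, let G = lim G_i be the inverse limit of an inverse system {G_i, φ_ij, I} of pro-p groups, and let H_i ≤ G_i be closed subgroups with φ_ij(H_i) ≤ H_j whenever j ≤ i. Suppose there is a constant d such that d(G_i) = d for all i ∈ I. Then for the induced closed subgroup H = lim H_i of G one has H^G = lim H_i^{G_i}, i.e. the smallest closed normal subgroup of G containing H equals the inverse limit of the smallest closed normal subgroups of the G_i containing the H_i. -/
/-!
Basic notions for pro-`p` groups.  Throughout, a pro-`p` group is a compact,
Hausdorff, totally disconnected topological group (these assumptions are carried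
as typeclass hypotheses) satisfying the predicate `IsProP`: every open normal
subgroup has index a power of `p`.
-/

universe u v

section ClosedNormalClosureBasic

variable {Γ : Type*} [Group Γ] [TopologicalSpace Γ]

theorem closedNormalClosure_isClosed (S : Set Γ) :
    IsClosed ((closedNormalClosure S : Subgroup Γ) : Set Γ) := by
  rw [closedNormalClosure, Subgroup.coe_sInf]
  exact isClosed_biInter fun N hN => hN.2.2

theorem closedNormalClosure_normal (S : Set Γ) : (closedNormalClosure S).Normal := by
  constructor
  intro n hn g
  rw [closedNormalClosure, Subgroup.mem_sInf] at hn ⊢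
  intro N hN
  exact hN.2.1.conj_mem n (hn N hN) g

theorem subset_closedNormalClosure (S : Set Γ) : S ⊆ ↑(closedNormalClosure S) := by
  intro s hs
  simp only [SetLike.mem_coe, closedNormalClosure, Subgroup.mem_sInf]
  exact fun N hN => hN.1 hs

theorem closedNormalClosure_eq [IsTopologicalGroup Γ] (S : Set Γ) :
    closedNormalClosure S = (Subgroup.normalClosure S).topologicalClosure := by
  apply le_antisymm
  · apply sInf_le
    refine ⟨?_, ?_, Subgroup.isClosed_topologicalClosure _⟩
    · exact fun s hs =>
        (Subgroup.normalClosure S).le_topologicalClosure (Subgroup.subset_normalClosure hs)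
    · exact Subgroup.is_normal_topologicalClosure _
  · haveI := closedNormalClosure_normal S
    exact Subgroup.topologicalClosure_minimal _
      (Subgroup.normalClosure_le_normal (subset_closedNormalClosure S))
      (closedNormalClosure_isClosed S)

theorem subgroup_stabilize {J : Type*} [Preorder J] [Nonempty J]
    (W : Subgroup Γ) (hW : W.index ≠ 0) (S : J → Subgroup Γ)
    (hmono : ∀ a b : J, a ≤ b → S b ≤ S a) (hle : ∀ j, W ≤ S j) :
    ∃ j0 : J, ∀ j, j0 ≤ j → S j = S j0 := by
  have hne : ∀ j, (S j).index ≠ 0 := by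
    intro j h0
    have hd := Subgroup.index_dvd_of_le (hle j)
    rw [h0] at hd
    exact hW (Nat.eq_zero_of_zero_dvd hd)
  have hbdd : BddAbove (Set.range fun j => (S j).index) := by
    refine ⟨W.index, ?_⟩
    rintro _ ⟨j, rfl⟩
    exact Nat.le_of_dvd (Nat.pos_of_ne_zero hW) (Subgroup.index_dvd_of_le (hle j))
  obtain ⟨j0, hj0⟩ := Nat.sSup_mem (Set.range_nonempty _) hbdd
  refine ⟨j0, fun j hj => ?_⟩
  have h1 : S j ≤ S j0 := hmono _ _ hj
  have hj0' : (S j0).index = sSup (Set.range fun j => (S j).index) := hj0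
  have h3 : (S j).index ≤ (S j0).index := by
    rw [hj0']; exact le_csSup hbdd ⟨j, rfl⟩
  have h4 : (S j0).index ≤ (S j).index :=
    Nat.le_of_dvd (Nat.pos_of_ne_zero (hne j)) (Subgroup.index_dvd_of_le h1)
  have h5 : (S j).index = (S j0).index := le_antisymm h3 h4
  have h2 := Subgroup.relIndex_mul_index h1
  rw [h5] at h2
  have h6 : (S j).relIndex (S j0) = 1 :=
    Nat.eq_of_mul_eq_mul_right (Nat.pos_of_ne_zero (hne j0)) (h2.trans (one_mul _).symm)
  exact le_antisymm h1 (Subgroup.relIndex_eq_one.mp h6)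

end ClosedNormalClosureBasic

section InvLimAux

variable {I : Type u} [Preorder I] [IsDirected I (· ≤ ·)]
  (G : I → Type v) [∀ i, Group (G i)] [∀ i, TopologicalSpace (G i)]
  [∀ i, IsTopologicalGroup (G i)] [∀ i, CompactSpace (G i)] [∀ i, T2Space (G i)]
  (φ : ∀ i j : I, j ≤ i → (G i →* G j))

theorem continuous_invLimProj (i : I) : Continuous (invLimProj G φ i) :=
  (continuous_apply i).comp continuous_subtype_val

theorem invLim_isClosed (hcont : ∀ (i j : I) (h : j ≤ i), Continuous (φ i j h)) :
    IsClosed ((invLim G φ : Subgroup (∀ i, G i)) : Set (∀ i, G i)) := by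
  have h : ((invLim G φ : Subgroup (∀ i, G i)) : Set (∀ i, G i)) =
      ⋂ (i : I) (j : I) (h : j ≤ i), {x : ∀ i, G i | φ i j h (x i) = x j} := by
    ext x
    simp only [Set.mem_iInter, Set.mem_setOf_eq]
    exact Iff.rfl
  rw [h]
  exact isClosed_iInter fun i => isClosed_iInter fun j => isClosed_iInter fun hij =>
    isClosed_eq ((hcont i j hij).comp (continuous_apply i)) (continuous_apply j)

theorem exists_lift (hcont : ∀ (i j : I) (h : j ≤ i), Continuous (φ i j h))
    (hid : ∀ i : I, φ i i le_rfl = MonoidHom.id (G i))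
    (hcomp : ∀ (i j k : I) (hij : j ≤ i) (hjk : k ≤ j),
      (φ j k hjk).comp (φ i j hij) = φ i k (hjk.trans hij))
    (H' : ∀ i, Subgroup (G i)) (hclosed : ∀ i, IsClosed ((H' i : Set (G i))))
    (hmap : ∀ (i j : I) (h : j ≤ i), (H' i).map (φ i j h) ≤ H' j)
    (k : I) (b : G k) (hb : ∀ (j : I) (h : k ≤ j), b ∈ (φ j k h) '' ((H' j : Set (G j)))) :
    ∃ y : ∀ i, G i, y ∈ invLim G φ ∧ (∀ i, y i ∈ H' i) ∧ y k = b := by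
  classical
  let J := {j : I // k ≤ j}
  haveI : Nonempty J := ⟨⟨k, le_rfl⟩⟩
  let D : J → Set (∀ i, G i) := fun j =>
    (⋂ (l : I) (h : l ≤ j.1), {y : ∀ i, G i | φ j.1 l h (y j.1) = y l}) ∩
      ((⋂ i : I, (fun y : ∀ i, G i => y i) ⁻¹' (H' i : Set (G i))) ∩ {y : ∀ i, G i | y k = b})
  have hDclosed : ∀ j : J, IsClosed (D j) := by
    intro j
    refine IsClosed.inter ?_ (IsClosed.inter ?_ ?_)
    · exact isClosed_iInter fun l => isClosed_iInter fun h =>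
        isClosed_eq ((hcont j.1 l h).comp (continuous_apply j.1)) (continuous_apply l)
    · exact isClosed_iInter fun i => (hclosed i).preimage (continuous_apply i)
    · exact isClosed_eq (continuous_apply k) continuous_const
  have hDne : ∀ j : J, (D j).Nonempty := by
    intro j
    obtain ⟨h0, hh0, hh0b⟩ := hb j.1 j.2
    refine ⟨fun l => if h : l ≤ j.1 then φ j.1 l h h0 else 1, ?_, ?_, ?_⟩
    · simp only [Set.mem_iInter, Set.mem_setOf_eq]
      intro l h
      rw [dif_pos (le_refl j.1), dif_pos h, hid j.1]
      rfl
    · simp only [Set.mem_iInter, Set.mem_preimage]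
      intro i
      by_cases h : i ≤ j.1
      · rw [dif_pos h]
        exact hmap j.1 i h ⟨h0, hh0, rfl⟩
      · rw [dif_neg h]
        exact (H' i).one_mem
    · simp only [Set.mem_setOf_eq]
      rw [dif_pos j.2]
      exact hh0b
  have hDkey : ∀ (m : J) (jj : J), jj.1 ≤ m.1 → D m ⊆ D jj := by
    intro m jj hjm y hy
    obtain ⟨hy1, hy2, hy3⟩ := hy
    simp only [Set.mem_iInter, Set.mem_setOf_eq] at hy1
    refine ⟨?_, hy2, hy3⟩
    simp only [Set.mem_iInter, Set.mem_setOf_eq]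
    intro l h
    have e1 : y jj.1 = φ m.1 jj.1 hjm (y m.1) := (hy1 jj.1 hjm).symm
    rw [e1, ← MonoidHom.comp_apply, hcomp m.1 jj.1 l hjm h]
    exact hy1 l (h.trans hjm)
  have hDdir : Directed (· ⊇ ·) D := by
    intro j1 j2
    obtain ⟨m, h1, h2⟩ := exists_ge_ge j1.1 j2.1
    have hkm : k ≤ m := j1.2.trans h1
    exact ⟨⟨m, hkm⟩, hDkey ⟨m, hkm⟩ j1 h1, hDkey ⟨m, hkm⟩ j2 h2⟩
  obtain ⟨y, hy⟩ := IsCompact.nonempty_iInter_of_directed_nonempty_isCompact_isClosed D hDdir hDne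
    (fun j => (hDclosed j).isCompact) hDclosed
  rw [Set.mem_iInter] at hy
  have hyprop : ∀ (j : J) (l : I) (h : l ≤ j.1), φ j.1 l h (y j.1) = y l := by
    intro j l h
    have h1 := (hy j).1
    simp only [Set.mem_iInter, Set.mem_setOf_eq] at h1
    exact h1 l h
  refine ⟨y, ?_, ?_, (hy ⟨k, le_rfl⟩).2.2⟩
  · show ∀ (i j : I) (h : j ≤ i), φ i j h (y i) = y j
    intro i j h
    obtain ⟨m, him, hkm⟩ := exists_ge_ge i k
    have h1 := hyprop ⟨m, hkm⟩ i him
    rw [← h1, ← MonoidHom.comp_apply, hcomp m i j him h]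
    exact hyprop ⟨m, hkm⟩ j (h.trans him)
  · intro i
    have h2 := (hy ⟨k, le_rfl⟩).2.1
    simp only [Set.mem_iInter, Set.mem_preimage] at h2
    exact h2 i

end InvLimAux

open Pointwise in
/-- **Lemma 2.1(b).** Let `G = lim Gᵢ` be the inverse limit of an inverse system of
pro-`p` groups with `d(Gᵢ) = d` constant, and let `Hᵢ ≤ Gᵢ` be closed subgroups with
`φᵢⱼ(Hᵢ) ≤ Hⱼ`.  Then for the induced closed subgroup `H = lim Hᵢ` of `G`, the
smallest closed normal subgroup of `G` containing `H` equals `lim Hᵢ^{Gᵢ}`, the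
inverse limit of the smallest closed normal subgroups of the `Gᵢ` containing the `Hᵢ`. -/
theorem closedNormalClosure_invLim
    {p : ℕ} [Fact p.Prime]
    {I : Type u} [Preorder I] [IsDirected I (· ≤ ·)] [Nonempty I]
    (G : I → Type v) [∀ i, Group (G i)] [∀ i, TopologicalSpace (G i)]
    [∀ i, IsTopologicalGroup (G i)] [∀ i, CompactSpace (G i)] [∀ i, T2Space (G i)]
    [∀ i, TotallyDisconnectedSpace (G i)]
    (hpro : ∀ i, IsProP p (G i))
    (φ : ∀ i j : I, j ≤ i → (G i →* G j))
    (hcont : ∀ (i j : I) (h : j ≤ i), Continuous (φ i j h))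
    (hid : ∀ i : I, φ i i le_rfl = MonoidHom.id (G i))
    (hcomp : ∀ (i j k : I) (hij : j ≤ i) (hjk : k ≤ j),
      (φ j k hjk).comp (φ i j hij) = φ i k (hjk.trans hij))
    (d : ℕ)
    (hd : ∀ i, dRank (G i) = (d : ℕ∞))
    (H : ∀ i, Subgroup (G i))
    (hHclosed : ∀ i, IsClosed ((H i : Set (G i))))
    (hHmap : ∀ (i j : I) (h : j ≤ i), (H i).map (φ i j h) ≤ H j) :
    closedNormalClosure
        ((⨅ i, (H i).comap (invLimProj G φ i) : Subgroup ↥(invLim G φ)) : Set ↥(invLim G φ))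
      = ⨅ i, (closedNormalClosure ((H i : Set (G i)))).comap (invLimProj G φ i) := by
  classical
  haveI hLcompact : CompactSpace ↥(invLim G φ) :=
    isCompact_iff_compactSpace.mp (invLim_isClosed G φ hcont).isCompact
  set Hsub : Subgroup ↥(invLim G φ) := ⨅ i, (H i).comap (invLimProj G φ i) with hHsubdef
  set K : Subgroup ↥(invLim G φ) := closedNormalClosure (Hsub : Set ↥(invLim G φ)) with hKdef
  have hKnormal : K.Normal := closedNormalClosure_normal _
  have hKclosed : IsClosed (K : Set ↥(invLim G φ)) := closedNormalClosure_isClosed _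
  have hHsubK : Hsub ≤ K := fun y hy => subset_closedNormalClosure _ hy
  apply le_antisymm
  · apply sInf_le
    refine ⟨?_, ?_, ?_⟩
    · intro y hy
      rw [hHsubdef] at hy
      simp only [SetLike.mem_coe, Subgroup.mem_iInf, Subgroup.mem_comap] at hy ⊢
      exact fun i => subset_closedNormalClosure ((H i : Set (G i))) (hy i)
    · constructor
      intro n hn g
      simp only [Subgroup.mem_iInf, Subgroup.mem_comap] at hn ⊢
      intro i
      have h1 := (closedNormalClosure_normal ((H i : Set (G i)))).conj_mem _ (hn i)
        (invLimProj G φ i g)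
      simpa only [map_mul, map_inv] using h1
    · have h2 : ((⨅ i, (closedNormalClosure ((H i : Set (G i)))).comap (invLimProj G φ i) :
          Subgroup ↥(invLim G φ)) : Set ↥(invLim G φ)) =
          ⋂ i, (invLimProj G φ i) ⁻¹' ((closedNormalClosure ((H i : Set (G i)))) : Set (G i)) := by
        rw [Subgroup.coe_iInf]
        simp only [Subgroup.coe_comap]
      rw [h2]
      exact isClosed_iInter fun i =>
        (closedNormalClosure_isClosed _).preimage (continuous_invLimProj G φ i)
  · intro x hx
    rw [Subgroup.mem_iInf] at hx
    -- Step C : for each k there is y ∈ K with the same k-th coordinate as x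
    have key : ∀ k : I, ∃ y : ↥(invLim G φ), y ∈ K ∧ invLimProj G φ k y = invLimProj G φ k x := by
      intro k
      let J := {j : I // k ≤ j}
      haveI : Nonempty J := ⟨⟨k, le_rfl⟩⟩
      have hJdir : ∀ a b : J, ∃ c : J, a ≤ c ∧ b ≤ c := by
        intro a b
        obtain ⟨m, h1, h2⟩ := exists_ge_ge a.1 b.1
        exact ⟨⟨m, a.2.trans h1⟩, h1, h2⟩
      let Amap : ∀ j : I, k ≤ j → Subgroup (G k) := fun j h => (H j).map (φ j k h)
      let Bmap : ∀ j : I, k ≤ j → Subgroup (G k) := fun j h => (⊤ : Subgroup (G j)).map (φ j k h)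
      have hAmapMono : ∀ (a b : I) (hab : a ≤ b) (hka : k ≤ a) (hkb : k ≤ b),
          Amap b hkb ≤ Amap a hka := by
        intro a b hab hka hkb
        have hc : (φ a k hka).comp (φ b a hab) = φ b k hkb := hcomp b a k hab hka
        calc (H b).map (φ b k hkb) = ((H b).map (φ b a hab)).map (φ a k hka) := by
              rw [Subgroup.map_map, hc]
          _ ≤ (H a).map (φ a k hka) := Subgroup.map_mono (hHmap b a hab)
      have hBmapMono : ∀ (a b : I) (hab : a ≤ b) (hka : k ≤ a) (hkb : k ≤ b),
          Bmap b hkb ≤ Bmap a hka := by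
        intro a b hab hka hkb
        have hc : (φ a k hka).comp (φ b a hab) = φ b k hkb := hcomp b a k hab hka
        calc (⊤ : Subgroup (G b)).map (φ b k hkb)
            = (((⊤ : Subgroup (G b)).map (φ b a hab)).map (φ a k hka)) := by
              rw [Subgroup.map_map, hc]
          _ ≤ (⊤ : Subgroup (G a)).map (φ a k hka) := Subgroup.map_mono le_top
      have hAcpt : ∀ (j : I) (h : k ≤ j), IsCompact ((Amap j h : Subgroup (G k)) : Set (G k)) := by
        intro j h
        rw [Subgroup.coe_map]
        exact ((hHclosed j).isCompact).image (hcont j k h)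
      have hBcpt : ∀ (j : I) (h : k ≤ j), IsCompact ((Bmap j h : Subgroup (G k)) : Set (G k)) := by
        intro j h
        rw [Subgroup.coe_map, Subgroup.coe_top]
        exact isCompact_univ.image (hcont j k h)
      set Aset : Set (G k) := ⋂ (j : I) (h : k ≤ j), ((Amap j h : Subgroup (G k)) : Set (G k))
        with hAsetdef
      set Bset : Set (G k) := ⋂ (j : I) (h : k ≤ j), ((Bmap j h : Subgroup (G k)) : Set (G k))
        with hBsetdef
      set P : Subgroup (G k) :=
        Subgroup.closure {γ : G k | ∃ a ∈ Aset, ∃ b ∈ Bset, γ = b * a * b⁻¹} with hPdef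
      -- the decomposition lemma modulo an open normal subgroup
      have decomp : ∀ (M : ∀ j : I, k ≤ j → Subgroup (G k)),
          (∀ (a b : I) (hab : a ≤ b) (hka : k ≤ a) (hkb : k ≤ b), M b hkb ≤ M a hka) →
          (∀ (j : I) (h : k ≤ j), IsCompact ((M j h : Subgroup (G k)) : Set (G k))) →
          ∀ (W : Subgroup (G k)), W.Normal → IsOpen (W : Set (G k)) →
          ∀ (j1 : I) (hj1 : k ≤ j1),
          (∀ (j : I) (hj : k ≤ j), M j1 hj1 ⊔ W ≤ M j hj ⊔ W) →
          ∀ a0, a0 ∈ M j1 hj1 →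
          ∃ a' ∈ ⋂ (j : I) (h : k ≤ j), ((M j h : Subgroup (G k)) : Set (G k)),
            ∃ w ∈ W, a0 = a' * w := by
        intro M hMono hMcpt W hWn hWopen j1 hj1 hstab a0 ha0
        haveI := hWn
        have hWclosed : IsClosed (W : Set (G k)) := Subgroup.isClosed_of_isOpen _ hWopen
        set C : Set (G k) := (fun y => y⁻¹ * a0) ⁻¹' (W : Set (G k)) with hCdef
        have hCclosed : IsClosed C := hWclosed.preimage (continuous_inv.mul continuous_const)
        set Z : J → Set (G k) := fun j => ((M j.1 j.2 : Subgroup (G k)) : Set (G k)) ∩ C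
          with hZdef
        have hZne : ∀ j : J, (Z j).Nonempty := by
          intro j
          have h1 : a0 ∈ (M j.1 j.2 ⊔ W : Subgroup (G k)) :=
            hstab j.1 j.2 ((le_sup_left : M j1 hj1 ≤ M j1 hj1 ⊔ W) ha0)
          have h2 : a0 ∈ ((M j.1 j.2 : Subgroup (G k)) : Set (G k)) * (W : Set (G k)) := by
            rw [← Subgroup.mul_normal]
            exact h1
          obtain ⟨m, hm, w, hw, hmw⟩ := Set.mem_mul.mp h2
          refine ⟨m, hm, ?_⟩
          show m⁻¹ * a0 ∈ (W : Set (G k))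
          rw [← hmw]
          simpa using hw
        have hZdir : Directed (· ⊇ ·) Z := by
          intro a b
          obtain ⟨c, hc1, hc2⟩ := hJdir a b
          exact ⟨c, fun y hy => ⟨hMono a.1 c.1 hc1 a.2 c.2 hy.1, hy.2⟩,
            fun y hy => ⟨hMono b.1 c.1 hc2 b.2 c.2 hy.1, hy.2⟩⟩
        obtain ⟨a', ha'⟩ := IsCompact.nonempty_iInter_of_directed_nonempty_isCompact_isClosed
          Z hZdir hZne (fun j => (hMcpt j.1 j.2).inter_right hCclosed)
          (fun j => ((hMcpt j.1 j.2).isClosed).inter hCclosed)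
        rw [Set.mem_iInter] at ha'
        refine ⟨a', Set.mem_iInter₂.mpr fun j h => (ha' ⟨j, h⟩).1,
          a'⁻¹ * a0, (ha' ⟨k, le_rfl⟩).2, (mul_inv_cancel_left a' a0).symm⟩
      -- Claim 1: x_k lies in P ⊔ W for every open normal subgroup W
      have claim1 : ∀ W : OpenNormalSubgroup (G k),
          invLimProj G φ k x ∈ P ⊔ W.toSubgroup := by
        intro W
        have hWopen := W.isOpen
        haveI : Finite (G k ⧸ W.toSubgroup) := Subgroup.quotient_finite_of_isOpen _ hWopen
        have hWindex : W.toSubgroup.index ≠ 0 := Subgroup.index_ne_zero_of_finite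
        obtain ⟨jA, hjA⟩ := subgroup_stabilize W.toSubgroup hWindex
          (fun j : J => Amap j.1 j.2 ⊔ W.toSubgroup)
          (fun a b hab => sup_le_sup_right (hAmapMono a.1 b.1 hab a.2 b.2) _)
          (fun j => le_sup_right)
        obtain ⟨jB, hjB⟩ := subgroup_stabilize W.toSubgroup hWindex
          (fun j : J => Bmap j.1 j.2 ⊔ W.toSubgroup)
          (fun a b hab => sup_le_sup_right (hBmapMono a.1 b.1 hab a.2 b.2) _)
          (fun j => le_sup_right)
        obtain ⟨j1, hj1A, hj1B⟩ := hJdir jA jB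
        have hstabA : ∀ (j : I) (hj : k ≤ j),
            Amap j1.1 j1.2 ⊔ W.toSubgroup ≤ Amap j hj ⊔ W.toSubgroup := by
          intro j hj
          obtain ⟨c, hc1, hc2⟩ := hJdir ⟨j, hj⟩ j1
          have e1 : Amap c.1 c.2 ⊔ W.toSubgroup = Amap jA.1 jA.2 ⊔ W.toSubgroup :=
            hjA c (le_trans hj1A hc2)
          have e2 : Amap j1.1 j1.2 ⊔ W.toSubgroup = Amap jA.1 jA.2 ⊔ W.toSubgroup := hjA j1 hj1A
          rw [e2, ← e1]
          exact sup_le_sup_right (hAmapMono j c.1 hc1 hj c.2) _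
        have hstabB : ∀ (j : I) (hj : k ≤ j),
            Bmap j1.1 j1.2 ⊔ W.toSubgroup ≤ Bmap j hj ⊔ W.toSubgroup := by
          intro j hj
          obtain ⟨c, hc1, hc2⟩ := hJdir ⟨j, hj⟩ j1
          have e1 : Bmap c.1 c.2 ⊔ W.toSubgroup = Bmap jB.1 jB.2 ⊔ W.toSubgroup :=
            hjB c (le_trans hj1B hc2)
          have e2 : Bmap j1.1 j1.2 ⊔ W.toSubgroup = Bmap jB.1 jB.2 ⊔ W.toSubgroup := hjB j1 hj1B
          rw [e2, ← e1]
          exact sup_le_sup_right (hBmapMono j c.1 hc1 hj c.2) _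
        -- x_k lies in the closure of the image of the normal closure of H j1
        have hxj1 : invLimProj G φ j1.1 x ∈ closedNormalClosure ((H j1.1 : Set (G j1.1))) :=
          Subgroup.mem_comap.mp (hx j1.1)
        rw [closedNormalClosure_eq] at hxj1
        have hxk : invLimProj G φ k x = φ j1.1 k j1.2 (invLimProj G φ j1.1 x) :=
          (x.2 j1.1 k j1.2).symm
        have hmem : invLimProj G φ k x ∈ closure
            (((Subgroup.normalClosure ((H j1.1 : Set (G j1.1)))).map (φ j1.1 k j1.2) :
              Subgroup (G k)) : Set (G k)) := by
          rw [hxk, Subgroup.coe_map]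
          exact image_closure_subset_closure_image (hcont j1.1 k j1.2) ⟨_, hxj1, rfl⟩
        have hPj1 : (Subgroup.normalClosure ((H j1.1 : Set (G j1.1)))).map (φ j1.1 k j1.2)
            ≤ P ⊔ W.toSubgroup := by
          show (Subgroup.closure (Group.conjugatesOfSet ((H j1.1 : Set (G j1.1))))).map
            (φ j1.1 k j1.2) ≤ P ⊔ W.toSubgroup
          rw [MonoidHom.map_closure]
          refine (Subgroup.closure_le _).mpr ?_
          rintro γ ⟨c, hc, rfl⟩
          obtain ⟨h', hh', hconj⟩ := Group.mem_conjugatesOfSet_iff.mp hc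
          obtain ⟨g, hg⟩ := isConj_iff.mp hconj
          obtain ⟨a', haset, wa, hwa, hae⟩ := decomp Amap hAmapMono hAcpt W.toSubgroup
            W.isNormal' W.isOpen j1.1 j1.2 hstabA (φ j1.1 k j1.2 h') ⟨h', hh', rfl⟩
          obtain ⟨b', hbset, wb, hwb, hbe⟩ := decomp Bmap hBmapMono hBcpt W.toSubgroup
            W.isNormal' W.isOpen j1.1 j1.2 hstabB (φ j1.1 k j1.2 g) ⟨g, trivial, rfl⟩
          have hγ : φ j1.1 k j1.2 c =
              φ j1.1 k j1.2 g * φ j1.1 k j1.2 h' * (φ j1.1 k j1.2 g)⁻¹ := by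
            rw [← hg, map_mul, map_mul, map_inv]
          show φ j1.1 k j1.2 c ∈ P ⊔ W.toSubgroup
          rw [hγ, hae, hbe]
          have heq : (b' * wb) * (a' * wa) * (b' * wb)⁻¹ =
              (b' * a' * b'⁻¹) * (b' * (a'⁻¹ * wb * a' * wb⁻¹) * b'⁻¹) *
                ((b' * wb) * wa * (b' * wb)⁻¹) := by
            group
          rw [heq]
          have hp : b' * a' * b'⁻¹ ∈ P := Subgroup.subset_closure ⟨a', haset, b', hbset, rfl⟩
          have hw4 : b' * (a'⁻¹ * wb * a' * wb⁻¹) * b'⁻¹ ∈ W.toSubgroup := by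
            have h1 : a'⁻¹ * wb * a' * wb⁻¹ ∈ W.toSubgroup := by
              have h2 := W.isNormal'.conj_mem wb hwb a'⁻¹
              rw [inv_inv] at h2
              exact mul_mem h2 (inv_mem hwb)
            exact W.isNormal'.conj_mem _ h1 b'
          have hw3 : (b' * wb) * wa * (b' * wb)⁻¹ ∈ W.toSubgroup := W.isNormal'.conj_mem _ hwa _
          exact mul_mem (mul_mem ((le_sup_left : P ≤ P ⊔ W.toSubgroup) hp)
            ((le_sup_right : W.toSubgroup ≤ P ⊔ W.toSubgroup) hw4))
            ((le_sup_right : W.toSubgroup ≤ P ⊔ W.toSubgroup) hw3)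
        have hPWclosed : IsClosed ((P ⊔ W.toSubgroup : Subgroup (G k)) : Set (G k)) :=
          Subgroup.isClosed_of_isOpen _ (Subgroup.isOpen_mono le_sup_right hWopen)
        have hfin : invLimProj G φ k x ∈ ((P ⊔ W.toSubgroup : Subgroup (G k)) : Set (G k)) :=
          closure_minimal (SetLike.coe_subset_coe.mpr hPj1) hPWclosed hmem
        exact hfin
      -- Claim 2: x_k lies in the closure of P
      have hxP : invLimProj G φ k x ∈ closure (P : Set (G k)) := by
        rw [mem_closure_iff]
        intro O hO hxO
        have hO1 : IsOpen ((fun y => invLimProj G φ k x * y) ⁻¹' O) :=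
          hO.preimage (continuous_const.mul continuous_id)
        have h1mem : (1 : G k) ∈ (fun y => invLimProj G φ k x * y) ⁻¹' O := by
          show invLimProj G φ k x * 1 ∈ O
          rwa [mul_one]
        obtain ⟨V, hVclopen, h1V, hVO⟩ := compact_exists_isClopen_in_isOpen hO1 h1mem
        obtain ⟨W, hWV⟩ :=
          IsTopologicalGroup.exist_openNormalSubgroup_sub_clopen_nhds_of_one hVclopen h1V
        have hx1 : invLimProj G φ k x ∈ (P : Set (G k)) * (W.toSubgroup : Set (G k)) := by
          rw [← Subgroup.mul_normal]
          exact claim1 W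
        obtain ⟨pp, hpp, w, hw, hmul⟩ := Set.mem_mul.mp hx1
        refine ⟨pp, ?_, hpp⟩
        have hpe : pp = invLimProj G φ k x * w⁻¹ := by
          rw [← hmul]
          group
        rw [hpe]
        exact hVO (hWV (inv_mem hw))
      -- Claim 3: closure of P is contained in the image of K
      have hPK : closure (P : Set (G k)) ⊆
          ((K.map (invLimProj G φ k) : Subgroup (G k)) : Set (G k)) := by
        have hclosed : IsClosed ((K.map (invLimProj G φ k) : Subgroup (G k)) : Set (G k)) := by
          rw [Subgroup.coe_map]
          exact ((hKclosed.isCompact).image (continuous_invLimProj G φ k)).isClosed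
        refine closure_minimal ?_ hclosed
        refine SetLike.coe_subset_coe.mpr ((Subgroup.closure_le _).mpr ?_)
        rintro γ ⟨a, ha, b, hb, rfl⟩
        have ha' : ∀ (j : I) (h : k ≤ j), a ∈ (φ j k h) '' ((H j : Set (G j))) := by
          intro j h
          have h1 := Set.mem_iInter₂.mp ha j h
          rwa [Subgroup.coe_map] at h1
        have hb' : ∀ (j : I) (h : k ≤ j), b ∈ (φ j k h) '' ((⊤ : Subgroup (G j)) : Set (G j)) := by
          intro j h
          have h1 := Set.mem_iInter₂.mp hb j h
          rwa [Subgroup.coe_map] at h1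
        obtain ⟨u, huL, huH, huk⟩ := exists_lift G φ hcont hid hcomp H hHclosed hHmap k a ha'
        obtain ⟨v, hvL, _, hvk⟩ := exists_lift G φ hcont hid hcomp (fun i => ⊤)
          (fun i => by rw [Subgroup.coe_top]; exact isClosed_univ)
          (fun i j h => le_top) k b hb'
        have hUK : (⟨u, huL⟩ : ↥(invLim G φ)) ∈ K := by
          apply hHsubK
          rw [hHsubdef, Subgroup.mem_iInf]
          intro i
          rw [Subgroup.mem_comap]
          exact huH i
        refine ⟨⟨v, hvL⟩ * ⟨u, huL⟩ * (⟨v, hvL⟩ : ↥(invLim G φ))⁻¹,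
          hKnormal.conj_mem _ hUK _, ?_⟩
        show v k * u k * (v k)⁻¹ = b * a * b⁻¹
        rw [huk, hvk]
      have hxk2 := hPK hxP
      rw [SetLike.mem_coe, Subgroup.mem_map] at hxk2
      obtain ⟨y, hyK, hyk⟩ := hxk2
      exact ⟨y, hyK, hyk⟩
    -- Step B: conclude x ∈ K by closedness
    have hxcl : x ∈ closure (K : Set ↥(invLim G φ)) := by
      rw [mem_closure_iff]
      intro O hO hxO
      obtain ⟨O', hO', rfl⟩ := isOpen_induced_iff.mp hO
      obtain ⟨F, V, hFV, hsub⟩ := isOpen_pi_iff.mp hO' _ hxO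
      obtain ⟨k, hk⟩ := F.exists_le
      obtain ⟨y, hyK, hyk⟩ := key k
      refine ⟨y, ?_, hyK⟩
      apply hsub
      intro i hiF
      have h1 : φ k i (hk i hiF) ((y : ∀ i, G i) k) = (y : ∀ i, G i) i := y.2 k i (hk i hiF)
      have h2 : φ k i (hk i hiF) ((x : ∀ i, G i) k) = (x : ∀ i, G i) i := x.2 k i (hk i hiF)
      have h3 : (y : ∀ i, G i) k = (x : ∀ i, G i) k := hyk
      have h4 : (y : ∀ i, G i) i = (x : ∀ i, G i) i := by
        rw [← h1, ← h2, h3]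
      show (y : ∀ i, G i) i ∈ V i
      rw [h4]
      exact (hFV i hiF).2
    exact hKclosed.closure_subset hxcl
end

section
/- Let G be a pro-p group acting continuously on a nonempty compact Hausdorff space X, and let (Ũ_n)_{n≥1} be a decreasing sequence of closed normal subgroups of G with ⋂_n Ũ_n = 1. Write G_n := G/Ũ_n with projections φ_n : G → G_n and φ_nm : G_n → G_m for m ≤ n, and let X_n := X/Ũ_n be the orbit space of the restricted Ũ_n-action, equipped with the induced continuous G_n-action. Let S_n ≤ G_n be closed subgroups with φ_nm(S_n) ≤ S_m for m ≤ n, and let S := {g ∈ G : φ_n(g) ∈ S_n for all n} be the induced closed subgroup of G. If the fixed-point set X_n^{S_n} is nonempty for every n, then the fixed-point set X^S is nonempty. -/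
/-!
Basic notions for pro-`p` groups.  Throughout, a pro-`p` group is a compact,
Hausdorff, totally disconnected topological group (these assumptions are carried
as typeclass hypotheses) satisfying the predicate `IsProP`: every open normal
subgroup has index a power of `p`.
-/

universe u v

/-- **Lemma 2.9.** Let a pro-`p` group `G` act continuously on a nonempty compact
Hausdorff space `X`, and let `(Uₙ)` be a decreasing sequence of closed normal
subgroups of `G` with `⋂ₙ Uₙ = 1`.  Closed subgroups `Sₙ` of `Gₙ := G/Uₙ` with
`φₙₘ(Sₙ) ≤ Sₘ` correspond exactly to closed subgroups `Sₙ ≤ G` with `Uₙ ≤ Sₙ` and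
`Sₙ ≤ Sₘ` for `m ≤ n`, and then `S := lim Sₙ = ⋂ₙ Sₙ`.  A point of the orbit space
`Xₙ := X/Uₙ` fixed by `Sₙ` is exactly a point `x ∈ X` with `s • x ∈ Uₙ • x` for all
`s ∈ Sₙ`.  If `Xₙ^{Sₙ} ≠ ∅` for all `n`, then `X^S ≠ ∅`. -/
theorem fixed_point_of_invLim
    {p : ℕ} [Fact p.Prime]
    (G : Type u) [Group G] [TopologicalSpace G] [IsTopologicalGroup G]
    [CompactSpace G] [T2Space G] [TotallyDisconnectedSpace G]
    (hpro : IsProP p G)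
    (X : Type v) [TopologicalSpace X] [Nonempty X] [CompactSpace X] [T2Space X]
    [MulAction G X] [ContinuousSMul G X]
    (U : ℕ → Subgroup G)
    (hUnormal : ∀ n, (U n).Normal)
    (hUclosed : ∀ n, IsClosed ((U n : Set G)))
    (hUmono : ∀ m n : ℕ, m ≤ n → U n ≤ U m)
    (hUinter : (⨅ n, U n) = ⊥)
    (S : ℕ → Subgroup G)
    (hUS : ∀ n, U n ≤ S n)
    (hSclosed : ∀ n, IsClosed ((S n : Set G)))
    (hSmono : ∀ m n : ℕ, m ≤ n → S n ≤ S m)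
    (hfix : ∀ n, ∃ x : X, ∀ s ∈ S n, ∃ u ∈ U n, s • x = u • x) :
    ∃ x : X, ∀ s ∈ ⨅ n, S n, s • x = x := by
  classical
  -- the "approximate fixed point" sets
  set F : ℕ → Set X := fun n => {x | ∀ s ∈ S n, ∃ u ∈ U n, s • x = u • x} with hF
  set K : ℕ → Set X := fun n => closure (⋃ k ∈ {k | n ≤ k}, F k) with hK
  have hAclosed : ∀ (s : G) (n : ℕ), IsClosed {y : X | ∃ u ∈ U n, s • y = u • y} := by
    intro s n
    haveI : CompactSpace (U n) := isCompact_iff_compactSpace.mp ((hUclosed n).isCompact)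
    have hC : IsClosed {q : (U n) × X | s • q.2 = (q.1 : G) • q.2} :=
      isClosed_eq (continuous_snd.const_smul s)
        (continuous_subtype_val.comp continuous_fst |>.smul continuous_snd)
    have hcompact : IsCompact {q : (U n) × X | s • q.2 = (q.1 : G) • q.2} := hC.isCompact
    have himg : IsCompact ((fun q : (U n) × X => q.2) ''
        {q : (U n) × X | s • q.2 = (q.1 : G) • q.2}) := hcompact.image continuous_snd
    have heq : {y : X | ∃ u ∈ U n, s • y = u • y} = ((fun q : (U n) × X => q.2) ''
        {q : (U n) × X | s • q.2 = (q.1 : G) • q.2}) := by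
      ext y
      constructor
      · rintro ⟨u, hu, h⟩
        exact ⟨⟨⟨u, hu⟩, y⟩, h, rfl⟩
      · rintro ⟨⟨⟨u, hu⟩, y'⟩, h, rfl⟩
        exact ⟨u, hu, h⟩
    rw [heq]
    exact himg.isClosed
  have hKclosed : ∀ n, IsClosed (K n) := fun n => isClosed_closure
  have hKne : ∀ n, (K n).Nonempty := by
    intro n
    obtain ⟨x, hx⟩ := hfix n
    exact ⟨x, subset_closure (Set.mem_biUnion (by simp) hx)⟩
  have hKmono : ∀ n, K (n + 1) ⊆ K n := by
    intro n
    apply closure_mono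
    apply Set.biUnion_subset_biUnion_left
    intro k hk
    exact le_trans (Nat.le_succ n) hk
  obtain ⟨x, hx⟩ := IsCompact.nonempty_iInter_of_sequence_nonempty_isCompact_isClosed
    K hKmono hKne ((hKclosed 0).isCompact) hKclosed
  refine ⟨x, fun s hs => ?_⟩
  have hsS : ∀ n, s ∈ S n := fun n => (Subgroup.mem_iInf.mp hs) n
  -- for each n, s • x ∈ U n • x
  have key : ∀ n, ∃ u ∈ U n, s • x = u • x := by
    intro n
    have hxK : x ∈ K n := Set.mem_iInter.mp hx n
    have hsub : K n ⊆ {y : X | ∃ u ∈ U n, s • y = u • y} := by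
      apply closure_minimal _ (hAclosed s n)
      rintro y hy
      simp only [Set.mem_iUnion] at hy
      obtain ⟨k, hk, hyF⟩ := hy
      obtain ⟨u, hu, h⟩ := hyF s (hsS k)
      exact ⟨u, hUmono n k hk hu, h⟩
    exact hsub hxK
  -- now use ⋂ U n = ⊥
  set T : ℕ → Set G := fun n => {u : G | u ∈ U n ∧ u • x = s • x} with hT
  have hTclosed : ∀ n, IsClosed (T n) := by
    intro n
    exact (hUclosed n).inter (isClosed_eq (continuous_id.smul continuous_const)
      continuous_const)
  have hTne : ∀ n, (T n).Nonempty := by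
    intro n
    obtain ⟨u, hu, h⟩ := key n
    exact ⟨u, hu, h.symm⟩
  have hTmono : ∀ n, T (n + 1) ⊆ T n := by
    rintro n u ⟨hu, h⟩
    exact ⟨hUmono n (n + 1) (Nat.le_succ n) hu, h⟩
  obtain ⟨u, hu⟩ := IsCompact.nonempty_iInter_of_sequence_nonempty_isCompact_isClosed
    T hTmono hTne ((hTclosed 0).isCompact) hTclosed
  have huU : u ∈ ⨅ n, U n := Subgroup.mem_iInf.mpr fun n => (Set.mem_iInter.mp hu n).1
  have hu1 : u = 1 := by rwa [hUinter, Subgroup.mem_bot] at huU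
  have := (Set.mem_iInter.mp hu 0).2
  rw [hu1, one_smul] at this
  exact this.symm
end
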